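/- arXiv:2411.04875 — 5 statements merged into one kernel-verified Lean document; each statement's English description precedes it below -/
import Mathlib

section
/- Let A be a unital C*-algebra, a a nonzero positive element of A, and x, y ∈ A admitting a-adjoints x^{#a}, y^{#a}, with ‖x‖_a, ‖x^{#a}‖_a, ‖y‖_a, ‖y^{#a}‖_a all finite. Then v_a(x + y)² ≤ v_a(x)² + v_a(y)² + v_a(y x) + (1/2)·‖x^{#a} x + y y^{#a}‖_a. -/
open scoped ComplexOrder

section

variable {A : Type*} [CStarAlgebra A] [PartialOrder A] [StarOrderedRing A]

/-- A positive linear functional on `A`: `f (x* x) ≥ 0` for all `x`. -/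
def IsPosLF (f : A →ₗ[ℂ] ℂ) : Prop := ∀ x : A, 0 ≤ f (star x * x)

/-- Membership in `S_a(A)`: positive linear functionals `f` with `f a = 1`. -/
def MemSa (a : A) (f : A →ₗ[ℂ] ℂ) : Prop := IsPosLF f ∧ f a = 1

/-- The set of values whose supremum is the `a`-seminorm `‖x‖ₐ`. -/
def aNormSet (a x : A) : Set ℝ :=
  {r : ℝ | ∃ f : A →ₗ[ℂ] ℂ, MemSa a f ∧ r = Real.sqrt (f (star x * a * x)).re}

/-- The `a`-seminorm `‖x‖ₐ = sup {√(f(x* a x)) : f ∈ S_a(A)}`. -/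
noncomputable def aNorm (a x : A) : ℝ := sSup (aNormSet a x)

/-- The `a`-numerical radius `vₐ(x) = sup {|f(a x)| : f ∈ S_a(A)}`. -/
noncomputable def aNR (a x : A) : ℝ :=
  sSup {r : ℝ | ∃ f : A →ₗ[ℂ] ℂ, MemSa a f ∧ r = ‖f (a * x)‖}

namespace S12
variable (a : A) (f : A →ₗ[ℂ] ℂ)

lemma f_im (hpos : IsPosLF f) (c : A) : (f (star c * c)).im = 0 := by
  have h := hpos c; rw [Complex.nonneg_iff] at h; exact h.2.symm

lemma f_star_mul (hpos : IsPosLF f) (u v : A) :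
    f (star v * u) = (starRingEnd ℂ) (f (star u * v)) := by
  have h1 : (f (star u * v)).im + (f (star v * u)).im = 0 := by
    have e : star (u + v) * (u + v)
        = star u * u + star u * v + star v * u + star v * v := by
      rw [star_add]; noncomm_ring
    have h := f_im f hpos (u + v)
    rw [e, map_add, map_add, map_add] at h
    simpa [f_im f hpos u, f_im f hpos v] using h
  have h2 : (f (star u * v)).re = (f (star v * u)).re := by
    have e : star (u + Complex.I • v) * (u + Complex.I • v)
        = star u * u + Complex.I • (star u * v) + (-Complex.I) • (star v * u)
          + star v * v := by
      simp only [star_add, star_smul, Complex.star_def, Complex.conj_I, add_mul, mul_add,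
        smul_mul_assoc, mul_smul_comm, smul_smul, neg_smul, neg_mul, neg_neg]
      match_scalars <;> simp [Complex.I_sq]
    have h := f_im f hpos (u + Complex.I • v)
    rw [e, map_add, map_add, map_add, map_smul, map_smul] at h
    simp only [Complex.add_im, Complex.smul_im, f_im f hpos u, f_im f hpos v,
      Complex.neg_im, Complex.smul_re] at h
    -- h should now relate re parts
    simp only [smul_eq_mul, Complex.mul_im, Complex.I_re, Complex.I_im, Complex.neg_re,
      Complex.neg_im] at h
    linarith [h]
  apply Complex.ext
  · simpa using h2.symm
  · simp only [Complex.conj_im]; linarith [h1]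

lemma f_star (hpos : IsPosLF f) (w : A) : f (star w) = (starRingEnd ℂ) (f w) := by
  simpa using f_star_mul f hpos 1 w

lemma B_conj (ha : 0 ≤ a) (hpos : IsPosLF f) (u v : A) :
    f (star v * a * u) = (starRingEnd ℂ) (f (star u * a * v)) := by
  have hsa : star a = a := (IsSelfAdjoint.of_nonneg ha).star_eq
  have hst : star (star u * a * v) = star v * a * u := by
    calc star (star u * a * v) = star v * (star a * star (star u)) := by
          rw [star_mul, star_mul]
    _ = star v * (a * u) := by rw [hsa, star_star]
    _ = star v * a * u := (mul_assoc _ _ _).symm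
  rw [← hst, f_star f hpos]

lemma B_pos (ha : 0 ≤ a) (hpos : IsPosLF f) (u : A) : 0 ≤ f (star u * a * u) := by
  have e : star (CFC.sqrt a * u) * (CFC.sqrt a * u) = star u * a * u := by
    rw [star_mul, (IsSelfAdjoint.of_nonneg (CFC.sqrt_nonneg (a := a))).star_eq,
      mul_assoc, ← mul_assoc (CFC.sqrt a), CFC.sqrt_mul_sqrt_self a ha, ← mul_assoc]
  rw [← e]; exact hpos _

lemma B_re_nonneg (ha : 0 ≤ a) (hpos : IsPosLF f) (u : A) : 0 ≤ (f (star u * a * u)).re :=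
  ((Complex.nonneg_iff).mp (B_pos a f ha hpos u)).1

noncomputable def coreOf (ha : 0 ≤ a) (hpos : IsPosLF f) :
    PreInnerProductSpace.Core ℂ A where
  inner u v := f (star u * a * v)
  conj_inner_symm u v := by
    show (starRingEnd ℂ) (f (star v * a * u)) = f (star u * a * v)
    rw [B_conj a f ha hpos u v, Complex.conj_conj]
  re_inner_nonneg u := by simpa using B_re_nonneg a f ha hpos u
  add_left u v w := by simp [star_add, add_mul, map_add]
  smul_left u v r := by
    show f (star (r • u) * a * v) = _
    rw [star_smul, smul_mul_assoc, smul_mul_assoc, map_smul, smul_eq_mul, starRingEnd_apply]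

lemma cauchy (ha : 0 ≤ a) (hpos : IsPosLF f) (u v : A) :
    ‖f (star u * a * v)‖ ^ 2
      ≤ (f (star u * a * u)).re * (f (star v * a * v)).re := by
  letI c := coreOf a f ha hpos
  have h := InnerProductSpace.Core.inner_mul_inner_self_le (𝕜 := ℂ) (F := A) u v
  have hsymm := InnerProductSpace.Core.norm_inner_symm (𝕜 := ℂ) (F := A) u v
  rw [← hsymm] at h
  have h' : ‖f (star u * a * v)‖ * ‖f (star u * a * v)‖
      ≤ (f (star u * a * u)).re * (f (star v * a * v)).re := h
  rw [sq]
  exact h'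

lemma abs_B_le (ha : 0 ≤ a) (hpos : IsPosLF f) (u v : A) :
    ‖f (star u * a * v)‖
      ≤ Real.sqrt (f (star u * a * u)).re * Real.sqrt (f (star v * a * v)).re := by
  have h := Real.le_sqrt_of_sq_le (cauchy a f ha hpos u v)
  rwa [Real.sqrt_mul (B_re_nonneg a f ha hpos u)] at h


lemma B_smul_right (t : ℂ) (u v : A) :
    f (star u * a * (t • v)) = t * f (star u * a * v) := by
  rw [mul_smul_comm, map_smul, smul_eq_mul]

lemma B_sub_right (u v w : A) :
    f (star u * a * (v - w)) = f (star u * a * v) - f (star u * a * w) := by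
  rw [mul_sub, map_sub]

lemma buzano (ha : 0 ≤ a) (hf : MemSa a f) (u v : A) :
    2 * (‖f (a * u)‖ * ‖f (a * v)‖)
      ≤ Real.sqrt (f (star u * a * u)).re * Real.sqrt (f (star v * a * v)).re
        + ‖f (star u * a * v)‖ := by
  obtain ⟨hpos, hfa⟩ := hf
  set c : ℂ := f (a * v) with hc
  set w : A := (2 * c) • (1 : A) - v with hw
  have hB1 : ∀ s : A, f (star s * a * (1:A)) = f (star s * a) := by intro s; rw [mul_one]
  have hav : f (star (1:A) * a * v) = c := by rw [star_one, one_mul]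
  have ha1 : f (star (1:A) * a * (1:A)) = 1 := by rw [star_one, one_mul, mul_one, hfa]
  -- B(1, w) = c
  have h1w : f (star (1:A) * a * w) = c := by
    rw [hw, B_sub_right, B_smul_right, ha1, hav]; ring
  -- B(v, w)
  have hvw : f (star v * a * w) = 2 * c * (starRingEnd ℂ) c - f (star v * a * v) := by
    rw [hw, B_sub_right, B_smul_right]
    rw [show f (star v * a * (1:A)) = (starRingEnd ℂ) (f (star (1:A) * a * v)) from by
      rw [B_conj a f ha hpos], hav]
  -- B(w, w).re = B(v, v).re
  have hww : (f (star w * a * w)).re = (f (star v * a * v)).re := by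
    have e1 : f (star w * a * w) = 2 * c * f (star w * a * (1:A)) - f (star w * a * v) := by
      rw [hw]; nth_rewrite 1 [B_sub_right]
      rw [B_smul_right]
    have e2 : f (star w * a * (1:A)) = (starRingEnd ℂ) c := by
      rw [B_conj a f ha hpos, h1w]
    have e3 : f (star w * a * v) = (starRingEnd ℂ) (f (star v * a * w)) := by
      rw [B_conj a f ha hpos]
    rw [e1, e2, e3, hvw]
    simp only [map_sub, map_mul, Complex.conj_conj, map_ofNat]
    rw [Complex.sub_re, Complex.sub_re]
    have : (2 * c * (starRingEnd ℂ) c).re = ((starRingEnd ℂ) c * (2 * c)).re := by ring_nf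
    rw [this]
    simp [Complex.conj_re]
    ring
  -- Cauchy-Schwarz on (u, w)
  have hcs : ‖f (star u * a * w)‖
      ≤ Real.sqrt (f (star u * a * u)).re * Real.sqrt (f (star v * a * v)).re := by
    have h := abs_B_le a f ha hpos u w
    rwa [hww] at h
  -- B(u, w) = 2 c B(u,1) - B(u,v)
  have huw : f (star u * a * w) = 2 * c * f (star u * a * (1:A)) - f (star u * a * v) := by
    rw [hw, B_sub_right, B_smul_right]
  -- |B(u,1)| = |f (a*u)|
  have hbu1 : ‖f (star u * a * (1:A))‖ = ‖f (a * u)‖ := by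
    rw [mul_one, show star u * a = star (a * u) from by rw [star_mul,
      (IsSelfAdjoint.of_nonneg ha).star_eq], f_star f hpos, Complex.norm_conj]
  calc 2 * (‖f (a * u)‖ * ‖f (a * v)‖)
      = ‖2 * c * f (star u * a * (1:A))‖ := by
        rw [norm_mul, norm_mul, hbu1, ← hc, Complex.norm_two]; ring
  _ = ‖f (star u * a * w) + f (star u * a * v)‖ := by rw [huw, sub_add_cancel]
  _ ≤ ‖f (star u * a * w)‖ + ‖f (star u * a * v)‖ :=
        norm_add_le _ _
  _ ≤ _ := add_le_add hcs le_rfl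


lemma f_nonneg (hpos : IsPosLF f) {w : A} (hw : 0 ≤ w) : 0 ≤ f w := by
  have e : star (CFC.sqrt w) * CFC.sqrt w = w := by
    rw [(IsSelfAdjoint.of_nonneg (CFC.sqrt_nonneg (a := w))).star_eq,
      CFC.sqrt_mul_sqrt_self w hw]
  rw [← e]; exact hpos _

lemma f_re_le (hpos : IsPosLF f) {w : A} (hw : 0 ≤ w) : (f w).re ≤ ‖w‖ * (f 1).re := by
  have h1 : w ≤ algebraMap ℝ A ‖w‖ :=
    IsSelfAdjoint.le_algebraMap_norm_self (IsSelfAdjoint.of_nonneg hw)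
  have h2 : 0 ≤ f (algebraMap ℝ A ‖w‖ - w) := f_nonneg f hpos (sub_nonneg.2 h1)
  have h3 : f (algebraMap ℝ A ‖w‖) = (‖w‖ : ℂ) * f 1 := by
    rw [IsScalarTower.algebraMap_apply ℝ ℂ A, Algebra.algebraMap_eq_smul_one, map_smul,
      smul_eq_mul, Complex.coe_algebraMap]
  rw [map_sub, h3] at h2
  have h4 := ((Complex.nonneg_iff).mp h2).1
  rw [Complex.sub_re, Complex.re_ofReal_mul] at h4
  linarith

lemma key (ha : 0 ≤ a) {z : A} (hz : star z * a = a * z) (hf : MemSa a f) :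
    (f (star z * a * z)).re ≤ ‖z‖ ^ 2 := by
  obtain ⟨hpos, hfa⟩ := hf
  have hzn : ∀ n : ℕ, star (z ^ n) * a = a * z ^ n := by
    intro n; induction n with
    | zero => simp
    | succ n ih =>
      calc star (z ^ (n+1)) * a = star z * (star (z ^ n) * a) := by
            rw [pow_succ, star_mul, mul_assoc]
      _ = star z * a * z ^ n := by rw [ih, mul_assoc]
      _ = a * (z * z ^ n) := by rw [hz, mul_assoc]
      _ = a * z ^ (n+1) := by rw [← pow_succ']
  set P : ℕ → ℝ := fun n => (f (star (z ^ n) * a * z ^ n)).re with hP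
  have hPnonneg : ∀ n, 0 ≤ P n := fun n => B_re_nonneg a f ha hpos _
  have hPeq : ∀ n, star (z ^ n) * a * z ^ n = star (1:A) * a * z ^ (2 * n) := by
    intro n
    rw [star_one, one_mul, hzn, mul_assoc, ← pow_add, two_mul]
  have hstep : ∀ n, P n ^ 2 ≤ P (2 * n) := by
    intro n
    have hcs := cauchy a f ha hpos 1 (z ^ (2 * n))
    rw [show star (1:A) * a * (1:A) = a from by rw [star_one, one_mul, mul_one], hfa,
      Complex.one_re, one_mul] at hcs
    have h1 : P n ≤ ‖f (star (1:A) * a * z ^ (2 * n))‖ := by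
      rw [hP]; simp only; rw [hPeq n]; exact Complex.re_le_norm _
    exact (pow_le_pow_left₀ (hPnonneg n) h1 2).trans hcs
  have hiter : ∀ k : ℕ, P 1 ^ (2 ^ k) ≤ P (2 ^ k) := by
    intro k; induction k with
    | zero => simp
    | succ k ih =>
      calc P 1 ^ 2 ^ (k+1) = (P 1 ^ 2 ^ k) ^ 2 := by rw [← pow_mul, pow_succ]
      _ ≤ P (2 ^ k) ^ 2 := pow_le_pow_left₀ (pow_nonneg (hPnonneg 1) _) ih 2
      _ ≤ P (2 * 2 ^ k) := hstep _
      _ = P (2 ^ (k+1)) := by rw [pow_succ, mul_comm]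
  have hf1 : 0 ≤ (f 1).re := by
    have := B_re_nonneg a f ha hpos 1  -- not quite; do directly
    have h := hpos 1; rw [star_one, one_mul] at h; exact ((Complex.nonneg_iff).mp h).1
  set C : ℝ := ‖a‖ * (f 1).re with hC
  have hC0 : 0 ≤ C := mul_nonneg (norm_nonneg a) hf1
  have hbound : ∀ k : ℕ, P (2 ^ k) ≤ C * (‖z‖ ^ 2) ^ (2 ^ k) := by
    intro k
    have hm : 0 < 2 ^ k := Nat.pow_pos (by norm_num)
    have hw : (0:A) ≤ star (z ^ 2 ^ k) * a * z ^ 2 ^ k := star_left_conjugate_nonneg ha _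
    have h1 := f_re_le f hpos hw
    have h2 : ‖star (z ^ 2 ^ k) * a * z ^ 2 ^ k‖ ≤ ‖z‖ ^ 2 ^ k * ‖a‖ * ‖z‖ ^ 2 ^ k := by
      calc ‖star (z ^ 2 ^ k) * a * z ^ 2 ^ k‖
          ≤ ‖star (z ^ 2 ^ k) * a‖ * ‖z ^ 2 ^ k‖ := norm_mul_le _ _
      _ ≤ ‖star (z ^ 2 ^ k)‖ * ‖a‖ * ‖z ^ 2 ^ k‖ :=
          mul_le_mul_of_nonneg_right (norm_mul_le _ _) (norm_nonneg _)
      _ = ‖z ^ 2 ^ k‖ * ‖a‖ * ‖z ^ 2 ^ k‖ := by rw [norm_star]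
      _ ≤ ‖z‖ ^ 2 ^ k * ‖a‖ * ‖z‖ ^ 2 ^ k := by
          have hp := norm_pow_le' z hm
          have h0 : (0:ℝ) ≤ ‖z ^ 2 ^ k‖ := norm_nonneg _
          exact mul_le_mul (mul_le_mul_of_nonneg_right hp (norm_nonneg a)) hp h0
            (by positivity)
    calc P (2 ^ k) ≤ ‖star (z ^ 2 ^ k) * a * z ^ 2 ^ k‖ * (f 1).re := h1
    _ ≤ (‖z‖ ^ 2 ^ k * ‖a‖ * ‖z‖ ^ 2 ^ k) * (f 1).re := by
          exact mul_le_mul_of_nonneg_right h2 hf1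
    _ = C * (‖z‖ ^ 2) ^ (2 ^ k) := by rw [hC, ← pow_mul, two_mul, pow_add]; ring
  -- conclude
  have hgoal : P 1 ≤ ‖z‖ ^ 2 := by
    by_contra hcon
    push_neg at hcon
    set t : ℝ := ‖z‖ ^ 2 with ht'
    have ht : 0 ≤ t := pow_nonneg (norm_nonneg _) _
    have hk : ∀ k : ℕ, P 1 ^ (2 ^ k) ≤ C * t ^ (2 ^ k) :=
      fun k => (hiter k).trans (hbound k)
    rcases eq_or_lt_of_le ht with h0 | hpos'
    · have := hk 0
      simp [← h0] at this
      linarith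
    · have hq : 1 < P 1 / t := (one_lt_div hpos').2 hcon
      have hqk : ∀ k : ℕ, (P 1 / t) ^ (2 ^ k) ≤ C := by
        intro k
        rw [div_pow, div_le_iff₀ (pow_pos hpos' _)]
        exact hk k
      obtain ⟨n, hn⟩ := pow_unbounded_of_one_lt C hq
      have hmono : (P 1 / t) ^ n ≤ (P 1 / t) ^ (2 ^ n) :=
        pow_le_pow_right₀ hq.le (Nat.lt_two_pow_self (n := n)).le
      linarith [hqk n]
  have : star z * a * z = star (z ^ 1) * a * z ^ 1 := by rw [pow_one]
  rw [this]
  exact hgoal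


end S12

open S12 in
/-- `vₐ(x+y)² ≤ vₐ(x)² + vₐ(y)² + vₐ(yx) + ½ ‖x^{#a}x + y y^{#a}‖ₐ`. -/
theorem stmt12 (a : A) (ha : 0 ≤ a) (ha0 : a ≠ 0)
    (x xadj y yadj : A)
    (hxadj : a * xadj = star x * a) (hyadj : a * yadj = star y * a)
    (hx : BddAbove (aNormSet a x)) (hxa : BddAbove (aNormSet a xadj))
    (hy : BddAbove (aNormSet a y)) (hya : BddAbove (aNormSet a yadj)) :
    aNR a (x + y) ^ 2 ≤
      aNR a x ^ 2 + aNR a y ^ 2 + aNR a (y * x) +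
        (1 / 2) * aNorm a (xadj * x + y * yadj) := by
  have hsa : star a = a := (IsSelfAdjoint.of_nonneg ha).star_eq
  set z : A := xadj * x + y * yadj with hzdef
  -- a-selfadjointness facts
  have hxadj' : star xadj * a = a * x := by
    calc star xadj * a = star xadj * star a := by rw [hsa]
    _ = star (a * xadj) := (star_mul _ _).symm
    _ = star (star x * a) := by rw [hxadj]
    _ = star a * x := by rw [star_mul, star_star]
    _ = a * x := by rw [hsa]
  have hyadj' : star yadj * a = a * y := by
    calc star yadj * a = star yadj * star a := by rw [hsa]
    _ = star (a * yadj) := (star_mul _ _).symm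
    _ = star (star y * a) := by rw [hyadj]
    _ = star a * y := by rw [star_mul, star_star]
    _ = a * y := by rw [hsa]
  have ex : star x * a * x = a * (xadj * x) := by rw [← hxadj, mul_assoc]
  have ey : star yadj * a * yadj = a * (y * yadj) := by rw [hyadj', mul_assoc]
  have hz : star z * a = a * z := by
    calc star z * a = (star x * star xadj + star yadj * star y) * a := by
          rw [hzdef, star_add, star_mul, star_mul]
    _ = star x * (star xadj * a) + star yadj * (star y * a) := by
          rw [add_mul, mul_assoc, mul_assoc]
    _ = star x * (a * x) + star yadj * (a * yadj) := by rw [hxadj', hyadj]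
    _ = star x * a * x + star yadj * a * yadj := by rw [mul_assoc, mul_assoc]
    _ = a * (xadj * x) + a * (y * yadj) := by rw [ex, ey]
    _ = a * z := by rw [hzdef, mul_add]
  -- nonnegativity of sups
  have aNR_nonneg : ∀ w : A, 0 ≤ aNR a w := fun w =>
    Real.sSup_nonneg (by rintro r ⟨f, hf, rfl⟩; exact norm_nonneg _)
  have aNorm_nonneg : ∀ w : A, 0 ≤ aNorm a w := fun w =>
    Real.sSup_nonneg (by rintro r ⟨f, hf, rfl⟩; exact Real.sqrt_nonneg _)
  -- bound for numerical radius elements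
  have habs : ∀ (w : A), BddAbove (aNormSet a w) → ∀ f : A →ₗ[ℂ] ℂ, MemSa a f →
      ‖f (a * w)‖ ≤ aNorm a w := by
    intro w hb f hf
    have hcs := abs_B_le a f ha hf.1 1 w
    rw [show star (1:A) * a * (1:A) = a from by rw [star_one, one_mul, mul_one],
      star_one, one_mul, hf.2, Complex.one_re, Real.sqrt_one, one_mul] at hcs
    exact hcs.trans (le_csSup hb ⟨f, hf, rfl⟩)
  have bddx : BddAbove {r : ℝ | ∃ f : A →ₗ[ℂ] ℂ, MemSa a f ∧ r = ‖f (a * x)‖} :=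
    ⟨aNorm a x, by rintro r ⟨g, hg, rfl⟩; exact habs x hx g hg⟩
  have bddy : BddAbove {r : ℝ | ∃ f : A →ₗ[ℂ] ℂ, MemSa a f ∧ r = ‖f (a * y)‖} :=
    ⟨aNorm a y, by rintro r ⟨g, hg, rfl⟩; exact habs y hy g hg⟩
  -- the cross identity
  have heq : ∀ g : A →ₗ[ℂ] ℂ, IsPosLF g →
      ‖g (star x * a * yadj)‖ = ‖g (a * (y * x))‖ := by
    intro g hg
    have e : star (a * (y * x)) = star x * a * yadj := by
      calc star (a * (y * x)) = star (y * x) * star a := star_mul _ _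
      _ = star x * star y * a := by rw [star_mul, hsa]
      _ = star x * (star y * a) := mul_assoc _ _ _
      _ = star x * (a * yadj) := by rw [hyadj]
      _ = star x * a * yadj := (mul_assoc _ _ _).symm
    rw [← e, f_star g hg, Complex.norm_conj]
  have bddyx : BddAbove {r : ℝ | ∃ f : A →ₗ[ℂ] ℂ, MemSa a f ∧ r = ‖f (a * (y * x))‖} := by
    refine ⟨aNorm a x * aNorm a yadj, ?_⟩
    rintro r ⟨g, hg, rfl⟩
    rw [← heq g hg.1]
    refine (abs_B_le a g ha hg.1 x yadj).trans ?_
    exact mul_le_mul (le_csSup hx ⟨g, hg, rfl⟩) (le_csSup hya ⟨g, hg, rfl⟩)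
      (Real.sqrt_nonneg _) (aNorm_nonneg x)
  have bddz : BddAbove (aNormSet a z) := by
    refine ⟨‖z‖, ?_⟩
    rintro r ⟨g, hg, rfl⟩
    calc Real.sqrt (g (star z * a * z)).re ≤ Real.sqrt (‖z‖ ^ 2) :=
          Real.sqrt_le_sqrt (key a g ha hz hg)
    _ = ‖z‖ := Real.sqrt_sq (norm_nonneg z)
  -- main bound
  set M : ℝ := aNR a x ^ 2 + aNR a y ^ 2 + aNR a (y * x) + (1 / 2) * aNorm a z with hM
  have hM0 : 0 ≤ M := by
    have := aNR_nonneg x; have := aNR_nonneg y; have := aNR_nonneg (y*x)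
    have := aNorm_nonneg z
    positivity
  have hmain : aNR a (x + y) ≤ Real.sqrt M := by
    refine Real.sSup_le ?_ (Real.sqrt_nonneg M)
    rintro r ⟨f, hf, rfl⟩
    refine Real.le_sqrt_of_sq_le ?_
    -- pointwise estimate
    set c1 : ℝ := ‖f (a * x)‖ with hc1
    set c2 : ℝ := ‖f (a * y)‖ with hc2
    have h0 : ‖f (a * (x + y))‖ ≤ c1 + c2 := by
      rw [mul_add, map_add]; exact norm_add_le _ _
    have h1 : c1 ≤ aNR a x := le_csSup bddx ⟨f, hf, rfl⟩
    have h2 : c2 ≤ aNR a y := le_csSup bddy ⟨f, hf, rfl⟩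
    -- cross term via Buzano
    have hc2' : ‖f (a * yadj)‖ = c2 := by
      have e : star (a * yadj) = a * y := by rw [hyadj, star_mul, star_star, hsa]
      rw [hc2, ← e, f_star f hf.1, Complex.norm_conj]
    have hbuz := buzano a f ha hf x yadj
    rw [hc2'] at hbuz
    have hcross : ‖f (star x * a * yadj)‖ ≤ aNR a (y * x) := by
      rw [heq f hf.1]
      exact le_csSup bddyx ⟨f, hf, rfl⟩
    -- AM-GM and the aNorm bound
    have hAM : Real.sqrt (f (star x * a * x)).re * Real.sqrt (f (star yadj * a * yadj)).re
        ≤ (1/2) * aNorm a z := by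
      set α : ℝ := (f (star x * a * x)).re with hα
      set β : ℝ := (f (star yadj * a * yadj)).re with hβ
      have hα0 : 0 ≤ α := B_re_nonneg a f ha hf.1 x
      have hβ0 : 0 ≤ β := B_re_nonneg a f ha hf.1 yadj
      have hAM1 : Real.sqrt α * Real.sqrt β ≤ (1/2) * (α + β) := by
        nlinarith [Real.sq_sqrt hα0, Real.sq_sqrt hβ0, sq_nonneg (Real.sqrt α - Real.sqrt β),
          Real.sqrt_nonneg α, Real.sqrt_nonneg β]
      have hsum : α + β = (f (a * z)).re := by
        rw [hα, hβ, ex, ey, hzdef, mul_add, map_add, Complex.add_re]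
      have hre : (f (a * z)).re ≤ aNorm a z := by
        have hr1 : (f (a * z)).re ≤ ‖f (a * z)‖ := Complex.re_le_norm _
        have hr2 : ‖f (a * z)‖ ≤ Real.sqrt (f (star z * a * z)).re := by
          have hcs := abs_B_le a f ha hf.1 1 z
          rwa [show star (1:A) * a * (1:A) = a from by rw [star_one, one_mul, mul_one],
            star_one, one_mul, hf.2, Complex.one_re, Real.sqrt_one, one_mul] at hcs
        have hr3 : Real.sqrt (f (star z * a * z)).re ≤ aNorm a z :=
          le_csSup bddz ⟨f, hf, rfl⟩
        linarith
      calc Real.sqrt α * Real.sqrt β ≤ (1/2) * (α + β) := hAM1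
      _ = (1/2) * (f (a * z)).re := by rw [hsum]
      _ ≤ (1/2) * aNorm a z := by linarith
    -- put it together
    have habs2 : ‖f (a * (x + y))‖ ^ 2 ≤ (c1 + c2) ^ 2 :=
      pow_le_pow_left₀ (norm_nonneg _) h0 2
    have hc10 : 0 ≤ c1 := norm_nonneg _
    have hc20 : 0 ≤ c2 := norm_nonneg _
    have hsq1 : c1 ^ 2 ≤ aNR a x ^ 2 := pow_le_pow_left₀ hc10 h1 2
    have hsq2 : c2 ^ 2 ≤ aNR a y ^ 2 := pow_le_pow_left₀ hc20 h2 2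
    have hcr : 2 * (c1 * c2) ≤ aNR a (y * x) + (1/2) * aNorm a z := by
      calc 2 * (c1 * c2) ≤ Real.sqrt (f (star x * a * x)).re *
              Real.sqrt (f (star yadj * a * yadj)).re
            + ‖f (star x * a * yadj)‖ := hbuz
      _ ≤ (1/2) * aNorm a z + aNR a (y * x) := add_le_add hAM hcross
      _ = aNR a (y * x) + (1/2) * aNorm a z := by ring
    rw [hM]
    nlinarith [habs2, hsq1, hsq2, hcr]
  calc aNR a (x + y) ^ 2 ≤ Real.sqrt M ^ 2 :=
        pow_le_pow_left₀ (aNR_nonneg _) hmain 2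
  _ = M := Real.sq_sqrt hM0
end
end

section
/- Let A be a unital C*-algebra, a a nonzero positive element of A, and x, y ∈ A admitting a-adjoints x^{#a}, y^{#a}, with ‖x‖_a and ‖y‖_a finite. Then for every real n > 1, v_a(x + y)² ≤ v_a(x)² + v_a(y)² + v_a(y x) + (1/n)·‖x‖_a^n + ((n − 1)/n)·‖y‖_a^{n/(n−1)}. -/
open scoped ComplexOrder

section

variable {A : Type*} [CStarAlgebra A] [PartialOrder A] [StarOrderedRing A]

/-! ### Auxiliary lemmas -/

lemma posLF_im {f : A →ₗ[ℂ] ℂ} (hf : IsPosLF f) (w : A) : (f (star w * w)).im = 0 :=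
  ((Complex.nonneg_iff.mp (hf w)).2).symm

lemma posLF_re {f : A →ₗ[ℂ] ℂ} (hf : IsPosLF f) (w : A) : 0 ≤ (f (star w * w)).re :=
  (Complex.nonneg_iff.mp (hf w)).1

/-- A positive linear functional is hermitian (polarization). -/
lemma posLF_conj {f : A →ₗ[ℂ] ℂ} (hf : IsPosLF f) (u v : A) :
    f (star v * u) = starRingEnd ℂ (f (star u * v)) := by
  have h1 : (f (star u * v)).im + (f (star v * u)).im = 0 := by
    have h := posLF_im hf (u + v)
    simp only [star_add, add_mul, mul_add, map_add, Complex.add_im,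
      posLF_im hf u, posLF_im hf v] at h
    linarith
  have h2 : (f (star u * v)).re - (f (star v * u)).re = 0 := by
    have h := posLF_im hf (Complex.I • u + v)
    simp only [star_add, star_smul, add_mul, mul_add, map_add, map_smul,
      smul_mul_assoc, mul_smul_comm, smul_smul, Complex.add_im, smul_eq_mul,
      Complex.star_def, Complex.conj_I, neg_mul, neg_smul, map_neg,
      Complex.neg_im, Complex.neg_re, Complex.mul_im, Complex.I_re,
      Complex.I_im, Complex.mul_re, posLF_im hf u, posLF_im hf v] at h
    ring_nf at h ⊢
    linarith
  apply Complex.ext <;> simp [Complex.conj_re, Complex.conj_im] <;> linarith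

/-- Cauchy–Schwarz inequality for positive linear functionals. -/
lemma posLF_cs {f : A →ₗ[ℂ] ℂ} (hf : IsPosLF f) (u v : A) :
    ‖f (star v * u)‖ ^ 2 ≤ (f (star u * u)).re * (f (star v * v)).re := by
  set α := f (star v * u) with hα
  by_cases h0 : α = 0
  · rw [h0]
    simpa using mul_nonneg (posLF_re hf u) (posLF_re hf v)
  · have habs : (0:ℝ) < ‖α‖ := norm_pos_iff.mpr h0
    have key : ∀ r : ℝ, 0 ≤ (f (star v * v)).re * (r * r)
        + (-(2 * ‖α‖)) * r + (f (star u * u)).re := by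
      intro r
      set s : ℝ := r / ‖α‖ with hs
      set t : ℂ := (s : ℂ) * α with ht
      have h1 : 0 ≤ f (star (u - t • v) * (u - t • v)) := hf _
      have hexp : star (u - t • v) * (u - t • v)
          = star u * u - (starRingEnd ℂ t) • (star v * u) - t • (star u * v)
            + (t * starRingEnd ℂ t) • (star v * v) := by
        simp only [star_sub, star_smul, sub_mul, mul_sub, smul_mul_assoc,
          mul_smul_comm, smul_smul, smul_sub, smul_add, Complex.star_def]
        abel
      rw [hexp] at h1
      have hconj : f (star u * v) = starRingEnd ℂ α := by
        rw [hα]; exact posLF_conj hf v u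
      have hm : (starRingEnd ℂ) α * α = ((‖α‖ : ℝ) : ℂ) ^ 2 := by
        rw [mul_comm, Complex.mul_conj, Complex.normSq_eq_norm_sq]; push_cast; ring
      have hm2 : α * (starRingEnd ℂ) α = ((‖α‖ : ℝ) : ℂ) ^ 2 := by
        rw [mul_comm]; exact hm
      have hval : f (star u * u) - (starRingEnd ℂ t) • α - t • (starRingEnd ℂ α)
            + (t * starRingEnd ℂ t) • f (star v * v)
          = f (star u * u) - ((s * ‖α‖ ^ 2 : ℝ) : ℂ)
            - ((s * ‖α‖ ^ 2 : ℝ) : ℂ)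
            + ((s ^ 2 * ‖α‖ ^ 2 : ℝ) : ℂ) * f (star v * v) := by
        rw [ht]
        simp only [map_mul, Complex.conj_ofReal, smul_eq_mul,
          Complex.ofReal_mul, Complex.ofReal_pow]
        linear_combination (-(s:ℂ)) * hm - ((s:ℂ)) * hm2
          + ((s:ℂ)^2 * f (star v * v)) * hm
      rw [map_add, map_sub, map_sub, map_smul, map_smul, map_smul, hconj, ← hα,
        hval] at h1
      have h2 := (Complex.nonneg_iff.mp h1).1
      simp only [Complex.add_re, Complex.sub_re, Complex.mul_re,
        Complex.ofReal_re, Complex.ofReal_im, posLF_im hf v, mul_zero, zero_mul,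
        sub_zero] at h2
      have e1 : s * ‖α‖ ^ 2 = r * ‖α‖ := by
        rw [hs, pow_two, ← mul_assoc, div_mul_cancel₀ _ habs.ne']
      have e2 : s ^ 2 * ‖α‖ ^ 2 = r * r := by
        rw [hs]; field_simp
      rw [e1, e2] at h2
      linarith
    have hd := discrim_le_zero key
    rw [discrim] at hd
    nlinarith [norm_nonneg α, posLF_re hf u, posLF_re hf v]

lemma sqrtfact {a : A} (ha : 0 ≤ a) (w z : A) :
    star w * a * z = star (CFC.sqrt a * w) * (CFC.sqrt a * z) := by
  rw [star_mul, (IsSelfAdjoint.of_nonneg (CFC.sqrt_nonneg (a := a))).star_eq,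
    mul_assoc (star w) (CFC.sqrt a) (CFC.sqrt a * z),
    ← mul_assoc (CFC.sqrt a) (CFC.sqrt a) z, CFC.sqrt_mul_sqrt_self a ha,
    mul_assoc (star w) a z]

lemma innerA_re {a : A} {f : A →ₗ[ℂ] ℂ} (ha : 0 ≤ a) (hf : IsPosLF f) (u : A) :
    0 ≤ (f (star u * a * u)).re := by
  rw [sqrtfact ha]; exact (Complex.nonneg_iff.mp (hf _)).1

lemma innerA_cs {a : A} {f : A →ₗ[ℂ] ℂ} (ha : 0 ≤ a) (hf : IsPosLF f) (u v : A) :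
    ‖f (star v * a * u)‖ ≤
      Real.sqrt (f (star u * a * u)).re * Real.sqrt (f (star v * a * v)).re := by
  rw [← Real.sqrt_mul (innerA_re ha hf u)]
  refine (Real.le_sqrt (norm_nonneg _)
    (mul_nonneg (innerA_re ha hf u) (innerA_re ha hf v))).mpr ?_
  rw [sqrtfact ha v u, sqrtfact ha u u, sqrtfact ha v v]
  exact posLF_cs hf _ _

lemma aNorm_nonneg {a : A} (x : A) : 0 ≤ aNorm a x :=
  Real.sSup_nonneg (by rintro r ⟨f, hf, rfl⟩; exact Real.sqrt_nonneg _)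

lemma aNR_nonneg {a : A} (x : A) : 0 ≤ aNR a x :=
  Real.sSup_nonneg (by rintro r ⟨f, hf, rfl⟩; exact norm_nonneg _)

lemma norm_f_le {a x : A} {f : A →ₗ[ℂ] ℂ} (hx : BddAbove (aNormSet a x))
    (hf : MemSa a f) : Real.sqrt (f (star x * a * x)).re ≤ aNorm a x :=
  le_csSup hx ⟨f, hf, rfl⟩

lemma abs_f_a_mul {a : A} {f : A →ₗ[ℂ] ℂ} (ha : 0 ≤ a) (hf : MemSa a f) (u : A) :
    ‖f (a * u)‖ ≤ Real.sqrt (f (star u * a * u)).re := by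
  have h := innerA_cs ha hf.1 u 1
  simp only [star_one, one_mul, mul_one] at h
  rw [hf.2] at h
  simpa using h

lemma aNR_bdd {a x : A} (ha : 0 ≤ a) (hx : BddAbove (aNormSet a x)) :
    BddAbove {r : ℝ | ∃ f : A →ₗ[ℂ] ℂ, MemSa a f ∧ r = ‖f (a * x)‖} := by
  refine ⟨aNorm a x, ?_⟩
  rintro r ⟨f, hf, rfl⟩
  exact (abs_f_a_mul ha hf x).trans (norm_f_le hx hf)

lemma le_aNR {a x : A} {f : A →ₗ[ℂ] ℂ} (ha : 0 ≤ a) (hx : BddAbove (aNormSet a x))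
    (hf : MemSa a f) : ‖f (a * x)‖ ≤ aNR a x :=
  le_csSup (aNR_bdd ha hx) ⟨f, hf, rfl⟩

lemma adj_star {a y yadj : A} (ha : 0 ≤ a) (hyadj : a * yadj = star y * a) :
    star yadj * a = a * y := by
  have h := congrArg star hyadj
  simp only [star_mul, star_star, (IsSelfAdjoint.of_nonneg ha).star_eq] at h
  exact h

/-- The `f`-seminorm of an `a`-adjoint is bounded by the `a`-seminorm. -/
lemma adj_norm_le {a y yadj : A} {f : A →ₗ[ℂ] ℂ} (ha : 0 ≤ a)
    (hy : BddAbove (aNormSet a y)) (hyadj : a * yadj = star y * a)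
    (hf : MemSa a f) :
    Real.sqrt (f (star yadj * a * yadj)).re ≤ aNorm a y := by
  set g : A →ₗ[ℂ] ℂ :=
    { toFun := fun z => f (star yadj * z * yadj)
      map_add' := by intro z w; rw [mul_add, add_mul, map_add]
      map_smul' := by intro c z; simp [mul_smul_comm, smul_mul_assoc] } with hgdef
  have hgval : ∀ z : A, g z = f (star yadj * z * yadj) := fun z => rfl
  have hg : IsPosLF g := by
    intro z
    have hrw : star yadj * (star z * z) * yadj = star (z * yadj) * (z * yadj) := by
      simp only [star_mul, mul_assoc]
    rw [hgval, hrw]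
    exact hf.1 _
  have hga : 0 ≤ g a := by
    have hrw : a = star (CFC.sqrt a) * CFC.sqrt a := by
      rw [(IsSelfAdjoint.of_nonneg (CFC.sqrt_nonneg (a := a))).star_eq,
        CFC.sqrt_mul_sqrt_self a ha]
    rw [hrw]; exact hg _
  have hgare : g a = f (star yadj * a * yadj) := rfl
  set m : ℝ := (f (star yadj * a * yadj)).re with hm
  have hm0 : 0 ≤ m := by rw [hm, ← hgare]; exact (Complex.nonneg_iff.mp hga).1
  rcases eq_or_lt_of_le hm0 with hmz | hmpos
  · rw [← hmz, Real.sqrt_zero]; exact aNorm_nonneg y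
  · set f' : A →ₗ[ℂ] ℂ := ((m⁻¹ : ℝ) : ℂ) • g with hf'def
    have hf'val : ∀ z : A, f' z = ((m⁻¹ : ℝ) : ℂ) * g z := fun z => rfl
    have hgac : g a = ((m : ℝ) : ℂ) := by
      apply Complex.ext
      · rw [Complex.ofReal_re, hm]; exact congrArg Complex.re hgare
      · rw [Complex.ofReal_im]; exact ((Complex.nonneg_iff.mp hga).2).symm
    have hf' : MemSa a f' := by
      constructor
      · intro z
        rw [hf'val]
        exact mul_nonneg (by positivity) (hg z)
      · rw [hf'val, hgac, ← Complex.ofReal_mul, inv_mul_cancel₀ (ne_of_gt hmpos)]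
        norm_num
    have hmemb : Real.sqrt ((f' (star y * a * y)).re) ≤ aNorm a y :=
      le_csSup hy ⟨f', hf', rfl⟩
    have hGnn : 0 ≤ (g (star y * a * y)).re := by
      have h0 : 0 ≤ g (star y * a * y) := by rw [sqrtfact ha]; exact hg _
      exact (Complex.nonneg_iff.mp h0).1
    set G : ℝ := (g (star y * a * y)).re with hG
    have hf're : (f' (star y * a * y)).re = m⁻¹ * G := by
      rw [hf'val]; simp [Complex.mul_re, hG]
    have hGle : G ≤ m * aNorm a y ^ 2 := by
      have h1 : m⁻¹ * G ≤ aNorm a y ^ 2 := by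
        rw [hf're] at hmemb
        have hnn : 0 ≤ m⁻¹ * G := mul_nonneg (by positivity) hGnn
        have h2 := pow_le_pow_left₀ (Real.sqrt_nonneg _) hmemb 2
        rwa [Real.sq_sqrt hnn] at h2
      calc G = m * (m⁻¹ * G) := by field_simp
        _ ≤ m * aNorm a y ^ 2 := mul_le_mul_of_nonneg_left h1 (le_of_lt hmpos)
    have hmle : m ≤ Real.sqrt G := by
      have hid1 : star yadj * a * yadj = a * (y * yadj) := by
        rw [adj_star ha hyadj, mul_assoc]
      have hid2 : star (y * yadj) * a * (y * yadj)
          = star yadj * (star y * a * y) * yadj := by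
        simp only [star_mul, mul_assoc]
      have h2 : m ≤ ‖f (a * (y * yadj))‖ := by
        rw [hm, hid1]; exact Complex.re_le_norm _
      have h3 := abs_f_a_mul ha hf (y * yadj)
      rw [hid2] at h3
      exact (h2.trans h3).trans_eq (by rw [hG, hgval])
    have h4 : Real.sqrt G ≤ Real.sqrt m * aNorm a y := by
      have h5 := Real.sqrt_le_sqrt hGle
      rwa [Real.sqrt_mul hm0, Real.sqrt_sq (aNorm_nonneg y)] at h5
    have h5 : Real.sqrt m * Real.sqrt m ≤ Real.sqrt m * aNorm a y := by
      have h6 : Real.sqrt m * Real.sqrt m = m := Real.mul_self_sqrt hm0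
      linarith [hmle, h4]
    exact le_of_mul_le_mul_left h5 (Real.sqrt_pos.mpr hmpos)

/-- Buzano's inequality in the semi-inner-product induced by `f` and `a`. -/
lemma buzano {a x y yadj : A} {f : A →ₗ[ℂ] ℂ} (ha : 0 ≤ a)
    (hyadj : a * yadj = star y * a) (hf : MemSa a f) :
    2 * (‖f (a * x)‖ * ‖f (a * y)‖) ≤
      Real.sqrt (f (star x * a * x)).re * Real.sqrt (f (star yadj * a * yadj)).re
        + ‖f (a * (y * x))‖ := by
  have hsa : star a = a := (IsSelfAdjoint.of_nonneg ha).star_eq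
  set c : ℂ := f (a * yadj) with hc
  have hstar : star yadj * a = a * y := adj_star ha hyadj
  have hcy : f (a * y) = starRingEnd ℂ c := by
    rw [← hstar]
    have h1 := posLF_conj hf.1 a yadj
    rw [hsa] at h1
    exact h1
  have hconj2 : (star (2 * c) : ℂ) = 2 * starRingEnd ℂ c := by
    rw [Complex.star_def, map_mul, map_ofNat]
  set R : A := (2 * c) • (1 : A) - yadj with hR
  have hR1 : f (star R * a * R) = f (star yadj * a * yadj) := by
    rw [hR]
    simp only [star_sub, star_smul, star_one, sub_mul, mul_sub, smul_mul_assoc,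
      mul_smul_comm, smul_smul, one_mul, mul_one, map_sub, map_smul, smul_eq_mul]
    rw [hconj2, hf.2, ← hc, hstar, hcy]
    ring
  have hR2 : f (star R * a * x) = 2 * starRingEnd ℂ c * f (a * x) - f (a * (y * x)) := by
    rw [hR]
    simp only [star_sub, star_smul, star_one, sub_mul, smul_mul_assoc, one_mul,
      map_sub, map_smul, smul_eq_mul]
    rw [hconj2, hstar, mul_assoc, mul_assoc]
  have h3 := innerA_cs ha hf.1 x R
  rw [hR1] at h3
  have h4 : 2 * (‖f (a * x)‖ * ‖f (a * y)‖)
      = ‖f (star R * a * x) + f (a * (y * x))‖ := by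
    rw [hcy, hR2, sub_add_cancel, norm_mul, norm_mul,
      Complex.norm_two, Complex.norm_conj]
    ring
  rw [h4]
  exact (norm_add_le _ _).trans (add_le_add_left h3 _)

/-- for real `n > 1`,
`vₐ(x+y)² ≤ vₐ(x)² + vₐ(y)² + vₐ(yx) + (1/n)‖x‖ₐⁿ + ((n-1)/n)‖y‖ₐ^{n/(n-1)}`. -/
theorem stmt13 (a : A) (ha : 0 ≤ a) (ha0 : a ≠ 0)
    (x xadj y yadj : A)
    (hxadj : a * xadj = star x * a) (hyadj : a * yadj = star y * a)
    (hx : BddAbove (aNormSet a x)) (hy : BddAbove (aNormSet a y))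
    (n : ℝ) (hn : 1 < n) :
    aNR a (x + y) ^ 2 ≤
      aNR a x ^ 2 + aNR a y ^ 2 + aNR a (y * x) +
        (1 / n) * aNorm a x ^ n + ((n - 1) / n) * aNorm a y ^ (n / (n - 1)) := by
  have hn0 : (0:ℝ) < n := lt_trans one_pos hn
  set K : ℝ := aNR a x ^ 2 + aNR a y ^ 2 + aNR a (y * x) +
      (1 / n) * aNorm a x ^ n + ((n - 1) / n) * aNorm a y ^ (n / (n - 1)) with hKdef
  have hKnn : 0 ≤ K := by
    have h1 : 0 ≤ aNR a (y * x) := aNR_nonneg _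
    have h2 : 0 ≤ (1 / n) * aNorm a x ^ n :=
      mul_nonneg (by positivity) (Real.rpow_nonneg (aNorm_nonneg x) n)
    have h3 : 0 ≤ ((n - 1) / n) * aNorm a y ^ (n / (n - 1)) :=
      mul_nonneg (div_nonneg (by linarith) hn0.le)
        (Real.rpow_nonneg (aNorm_nonneg y) _)
    have h4 : 0 ≤ aNR a x ^ 2 := sq_nonneg _
    have h5 : 0 ≤ aNR a y ^ 2 := sq_nonneg _
    rw [hKdef]
    linarith
  have hyx_bdd : BddAbove {r : ℝ | ∃ f : A →ₗ[ℂ] ℂ, MemSa a f ∧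
      r = ‖f (a * (y * x))‖} := by
    refine ⟨aNorm a x * aNorm a y, ?_⟩
    rintro r ⟨f, hf, rfl⟩
    have hid : a * (y * x) = star yadj * a * x := by
      rw [adj_star ha hyadj, mul_assoc]
    rw [hid]
    exact (innerA_cs ha hf.1 x yadj).trans
      (mul_le_mul (norm_f_le hx hf) (adj_norm_le ha hy hyadj hf)
        (Real.sqrt_nonneg _) (aNorm_nonneg _))
  have hpq : Real.HolderConjugate n (n / (n - 1)) := by
    have h := Real.HolderConjugate.conjExponent hn
    unfold Real.conjExponent at h
    exact h
  have hyoung : aNorm a x * aNorm a y ≤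
      (1 / n) * aNorm a x ^ n + ((n - 1) / n) * aNorm a y ^ (n / (n - 1)) := by
    have h := Real.young_inequality_of_nonneg (aNorm_nonneg (a := a) x) (aNorm_nonneg (a := a) y) hpq
    have e1 : aNorm a x ^ n / n = (1 / n) * aNorm a x ^ n := by ring
    have e2 : aNorm a y ^ (n / (n - 1)) / (n / (n - 1))
        = ((n - 1) / n) * aNorm a y ^ (n / (n - 1)) := by
      rw [div_div_eq_mul_div]; ring
    rw [e1, e2] at h
    exact h
  have hpoint : ∀ r ∈ {r : ℝ | ∃ f : A →ₗ[ℂ] ℂ, MemSa a f ∧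
      r = ‖f (a * (x + y))‖}, r ≤ Real.sqrt K := by
    rintro r ⟨f, hf, rfl⟩
    have hsplit : f (a * (x + y)) = f (a * x) + f (a * y) := by
      rw [mul_add, map_add]
    have hp : ‖f (a * x)‖ ≤ aNR a x := le_aNR ha hx hf
    have hq : ‖f (a * y)‖ ≤ aNR a y := le_aNR ha hy hf
    have hyx : ‖f (a * (y * x))‖ ≤ aNR a (y * x) :=
      le_csSup hyx_bdd ⟨f, hf, rfl⟩
    have hbz := buzano (x := x) ha hyadj hf
    have hnf1 : Real.sqrt (f (star x * a * x)).re ≤ aNorm a x := norm_f_le hx hf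
    have hnf2 : Real.sqrt (f (star yadj * a * yadj)).re ≤ aNorm a y :=
      adj_norm_le ha hy hyadj hf
    have hcross : 2 * (‖f (a * x)‖ * ‖f (a * y)‖)
        ≤ aNorm a x * aNorm a y + aNR a (y * x) := by
      refine hbz.trans ?_
      have h6 := mul_le_mul hnf1 hnf2 (Real.sqrt_nonneg _) (aNorm_nonneg x)
      linarith [hyx]
    have habs : ‖f (a * (x + y))‖
        ≤ ‖f (a * x)‖ + ‖f (a * y)‖ := by
      rw [hsplit]; exact norm_add_le _ _
    have hsq : ‖f (a * (x + y))‖ ^ 2 ≤ K := by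
      have h1 := pow_le_pow_left₀ (norm_nonneg _) habs 2
      have h2 : (‖f (a * x)‖ + ‖f (a * y)‖) ^ 2
          = ‖f (a * x)‖ ^ 2 + ‖f (a * y)‖ ^ 2
            + 2 * (‖f (a * x)‖ * ‖f (a * y)‖) := by ring
      have h3 := pow_le_pow_left₀ (norm_nonneg (f (a * x))) hp 2
      have h4 := pow_le_pow_left₀ (norm_nonneg (f (a * y))) hq 2
      rw [hKdef]
      linarith [hcross, hyoung]
    exact (Real.le_sqrt (norm_nonneg _) hKnn).mpr hsq
  have hle : aNR a (x + y) ≤ Real.sqrt K := by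
    unfold aNR
    exact Real.sSup_le hpoint (Real.sqrt_nonneg _)
  calc aNR a (x + y) ^ 2 ≤ Real.sqrt K ^ 2 :=
        pow_le_pow_left₀ (aNR_nonneg _) hle 2
    _ = K := Real.sq_sqrt hKnn

end
end

section
/- Let A be a unital C*-algebra, x, y, z ∈ A with ‖y‖ ≤ 1, and φ an Orlicz function. Then φ(v(x y z*)) ≤ (‖y‖ / 2)·‖φ(x x*) + φ(z z*)‖, where φ(x x*) and φ(z z*) are defined by continuous functional calculus on the positive elements x x* and z z*. -/
open scoped ComplexOrder

section

variable {A : Type*} [CStarAlgebra A] [PartialOrder A] [StarOrderedRing A]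

/-- A state on `A`: a positive linear functional with `g 1 = 1`. -/
def IsState (g : A →ₗ[ℂ] ℂ) : Prop := IsPosLF g ∧ g 1 = 1

/-- The (algebraic) numerical radius `v(x) = sup {|g x| : g a state on A}`. -/
noncomputable def nr (x : A) : ℝ :=
  sSup {r : ℝ | ∃ g : A →ₗ[ℂ] ℂ, IsState g ∧ r = ‖g x‖}

/-- An Orlicz function: `φ : [0,∞) → [0,∞)` (modelled on `ℝ`) which is continuous, convex,
non-decreasing on `[0,∞)`, with `φ 0 = 0`, `φ u > 0` for `u > 0`, and `φ u → ∞` as `u → ∞`. -/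
structure IsOrlicz (φ : ℝ → ℝ) : Prop where
  continuousOn : ContinuousOn φ (Set.Ici 0)
  convexOn : ConvexOn ℝ (Set.Ici 0) φ
  monotoneOn : MonotoneOn φ (Set.Ici 0)
  map_zero : φ 0 = 0
  pos : ∀ u : ℝ, 0 < u → 0 < φ u
  tendsto_atTop : Filter.Tendsto φ Filter.atTop Filter.atTop

namespace StateAux

variable {g : A →ₗ[ℂ] ℂ}

lemma st_nonneg (hg : IsState g) {a : A} (ha : 0 ≤ a) : 0 ≤ g a := by
  have h1 : star (CFC.sqrt a) * CFC.sqrt a = a := by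
    rw [(IsSelfAdjoint.of_nonneg (CFC.sqrt_nonneg a)).star_eq, CFC.sqrt_mul_sqrt_self a ha]
  simpa [h1] using hg.1 (CFC.sqrt a)

lemma st_im (hg : IsState g) {a : A} (ha : 0 ≤ a) : (g a).im = 0 := by
  have := st_nonneg hg ha; rw [Complex.le_def] at this; simpa using this.2.symm

lemma st_re_nonneg (hg : IsState g) {a : A} (ha : 0 ≤ a) : 0 ≤ (g a).re := by
  have := st_nonneg hg ha; rw [Complex.le_def] at this; simpa using this.1

lemma st_eq_re (hg : IsState g) {a : A} (ha : 0 ≤ a) : g a = ((g a).re : ℂ) :=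
  Complex.ext (by simp) (by simpa using st_im hg ha)

lemma st_algebraMap (hg : IsState g) (r : ℝ) : g (algebraMap ℝ A r) = r := by
  have : algebraMap ℝ A r = (r : ℂ) • (1 : A) := by
    rw [Algebra.algebraMap_eq_smul_one]
    exact (algebraMap_smul ℂ r (1:A)).symm
  rw [this, map_smul, hg.2]; simp

lemma st_im_selfAdjoint (hg : IsState g) {a : A} (ha : IsSelfAdjoint a) : (g a).im = 0 := by
  have hq : (0:A) ≤ algebraMap ℝ A ‖a‖ + a := by
    have := (ha.neg.le_algebraMap_norm_self : -a ≤ algebraMap ℝ A ‖-a‖)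
    rw [norm_neg] at this
    simpa [sub_neg_eq_add] using sub_nonneg.mpr this
  have hp : (0:A) ≤ algebraMap ℝ A ‖a‖ - a := sub_nonneg.mpr ha.le_algebraMap_norm_self
  have h1 := st_im hg hq
  have h2 := st_im hg hp
  rw [map_add] at h1; rw [map_sub] at h2
  simp only [Complex.add_im, Complex.sub_im] at h1 h2
  have h3 : (g (algebraMap ℝ A ‖a‖)).im = 0 := by rw [st_algebraMap hg]; simp
  rw [h3] at h1 h2; linarith

lemma st_star (hg : IsState g) (a : A) : g (star a) = starRingEnd ℂ (g a) := by
  set h : A := (2⁻¹ : ℂ) • (a + star a) with hh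
  set k : A := (2⁻¹ : ℂ) • (Complex.I • (star a - a)) with hk
  have hIk : Complex.I • k = (2⁻¹:ℂ) • (a - star a) := by
    rw [hk, smul_smul, smul_smul]
    have hI : Complex.I * 2⁻¹ * Complex.I = -2⁻¹ := by
      linear_combination (2⁻¹ : ℂ) * Complex.I_mul_I
    rw [hI]; module
  have hha : IsSelfAdjoint h := by
    rw [hh, IsSelfAdjoint, star_smul, star_add, star_star]
    have : star (2⁻¹ : ℂ) = (2⁻¹ : ℂ) := by
      rw [Complex.star_def, map_inv₀, Complex.conj_ofNat]
    rw [this, add_comm]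
  have hka : IsSelfAdjoint k := by
    rw [hk, IsSelfAdjoint, star_smul, star_smul, star_sub, star_star]
    have h2 : star (2⁻¹ : ℂ) = (2⁻¹ : ℂ) := by
      rw [Complex.star_def, map_inv₀, Complex.conj_ofNat]
    rw [h2, Complex.star_def, Complex.conj_I]
    module
  have hdecomp : a = h + Complex.I • k := by rw [hIk, hh]; module
  have hstar : star a = h - Complex.I • k := by
    conv_lhs => rw [hdecomp]
    rw [star_add, hha.star_eq, star_smul, hka.star_eq, Complex.star_def, Complex.conj_I]
    module
  have g1 := st_im_selfAdjoint hg hha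
  have g2 := st_im_selfAdjoint hg hka
  clear_value h k
  rw [hstar]
  conv_rhs => rw [hdecomp]
  rw [map_sub, map_add, map_smul]
  simp only [smul_eq_mul]
  apply Complex.ext <;>
    simp [Complex.mul_re, Complex.mul_im, g1, g2]


lemma st_mono (hg : IsState g) {a b : A} (hab : a ≤ b) : (g a).re ≤ (g b).re := by
  have := st_re_nonneg hg (sub_nonneg.mpr hab)
  rw [map_sub] at this; simp only [Complex.sub_re] at this; linarith

lemma expand_st (a b : A) (t : ℂ) :
    star (a + t • b) * (a + t • b) = star a * a + t • (star a * b) +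
      (starRingEnd ℂ t) • (star b * a) + ((starRingEnd ℂ t) * t) • (star b * b) := by
  rw [star_add, star_smul, add_mul, mul_add, mul_add, smul_mul_assoc, smul_mul_assoc,
    mul_smul_comm, mul_smul_comm, smul_smul, starRingEnd_apply]
  abel

lemma st_cs (hg : IsState g) (a b : A) :
    ‖g (star b * a)‖ ^ 2 ≤ (g (star a * a)).re * (g (star b * b)).re := by
  set α := (g (star a * a)).re with hα
  set β := (g (star b * b)).re with hβ
  set γ := g (star b * a) with hγ
  have hαc : g (star a * a) = (α : ℂ) := st_eq_re hg (star_mul_self_nonneg a)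
  have hβc : g (star b * b) = (β : ℂ) := st_eq_re hg (star_mul_self_nonneg b)
  have hab : g (star a * b) = starRingEnd ℂ γ := by
    rw [hγ, ← st_star hg, star_mul, star_star]
  have hβ0 : 0 ≤ β := st_re_nonneg hg (star_mul_self_nonneg b)
  have key : ∀ c : ℝ, 0 ≤ α - 2*c*Complex.normSq γ + c^2 * Complex.normSq γ * β := by
    intro c
    have h0 := hg.1 (a + (-(c:ℂ) * γ) • b)
    rw [expand_st, map_add, map_add, map_add, map_smul, map_smul, map_smul,
      hαc, hβc, hab, Complex.le_def] at h0
    have h1 := h0.1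
    simp only [smul_eq_mul, map_mul, map_neg, Complex.conj_ofReal, Complex.conj_conj,
      Complex.add_re, Complex.zero_re, Complex.ofReal_re, Complex.mul_re, Complex.conj_re,
      Complex.conj_im, Complex.neg_re, Complex.neg_im, Complex.ofReal_im, Complex.mul_im] at h1
    simp only [Complex.normSq_apply]
    exact h1.trans_eq (by ring)
  rw [Complex.sq_norm]
  rcases eq_or_lt_of_le hβ0 with hβz | hβpos
  · have hγ0 : Complex.normSq γ = 0 := by
      by_contra hne
      have hpos : 0 < Complex.normSq γ := lt_of_le_of_ne (Complex.normSq_nonneg γ) (Ne.symm hne)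
      have hk := key ((α + 1) / (2 * Complex.normSq γ))
      rw [← hβz, mul_zero] at hk
      have h4 : 2*((α+1)/(2*Complex.normSq γ))*Complex.normSq γ = α + 1 := by field_simp
      linarith
    rw [hγ0, ← hβz]; simp
  · have hk := key (1 / β)
    have h2 : α - 2*(1/β)*Complex.normSq γ + (1/β)^2 * Complex.normSq γ * β
        = α - Complex.normSq γ / β := by field_simp; ring
    rw [h2] at hk
    have h5 : Complex.normSq γ / β ≤ α := by linarith
    calc Complex.normSq γ = (Complex.normSq γ / β) * β := by field_simp
      _ ≤ α * β := mul_le_mul_of_nonneg_right h5 hβ0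


lemma exists_subgradient {φ : ℝ → ℝ} (hconv : ConvexOn ℝ (Set.Ici 0) φ) {m : ℝ} (hm : 0 < m) :
    ∃ k : ℝ, ∀ u : ℝ, 0 ≤ u → φ m + k * (u - m) ≤ φ u := by
  set S : Set ℝ := {s | ∃ u, 0 ≤ u ∧ u < m ∧ s = (φ m - φ u) / (m - u)} with hS
  have hne : S.Nonempty := ⟨(φ m - φ 0)/(m - 0), 0, le_refl 0, hm, rfl⟩
  have hub : ∀ s ∈ S, ∀ v, m < v → s ≤ (φ v - φ m) / (v - m) := by
    rintro s ⟨u, hu0, hum, rfl⟩ v hv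
    exact hconv.slope_mono_adjacent hu0 (le_trans hu0 (le_of_lt (hum.trans hv))) hum hv
  have hbdd : BddAbove S := ⟨(φ (m+1) - φ m) / (m+1-m), fun s hs =>
    hub s hs (m+1) (lt_add_one m)⟩
  refine ⟨sSup S, fun u hu0 => ?_⟩
  rcases lt_trichotomy u m with hum | rfl | hmu
  · have hmem : (φ m - φ u) / (m - u) ∈ S := ⟨u, hu0, hum, rfl⟩
    have h1 : (φ m - φ u) / (m - u) ≤ sSup S := le_csSup hbdd hmem
    have h2 : 0 < m - u := by linarith
    rw [div_le_iff₀ h2] at h1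
    nlinarith
  · simp
  · have h1 : sSup S ≤ (φ u - φ m) / (u - m) := csSup_le hne (fun s hs => hub s hs u hmu)
    have h2 : 0 < u - m := by linarith
    rw [le_div_iff₀ h2] at h1
    nlinarith

lemma st_jensen (hg : IsState g) {a : A} (ha : 0 ≤ a) {φ : ℝ → ℝ} (hφ : IsOrlicz φ) :
    φ ((g a).re) ≤ (g (cfc φ a)).re := by
  have ha' : IsSelfAdjoint a := .of_nonneg ha
  have hspec : ∀ x ∈ spectrum ℝ a, 0 ≤ x := fun x hx => spectrum_nonneg_of_nonneg ha hx
  have hφ0 : ∀ u : ℝ, 0 ≤ u → 0 ≤ φ u := fun u hu =>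
    hφ.map_zero ▸ hφ.monotoneOn (Set.self_mem_Ici) hu hu
  have hφcont : ContinuousOn φ (spectrum ℝ a) := hφ.continuousOn.mono hspec
  have hcfc0 : 0 ≤ cfc φ a := cfc_nonneg (fun x hx => hφ0 x (hspec x hx))
  have hm0 : 0 ≤ (g a).re := st_re_nonneg hg ha
  rcases eq_or_lt_of_le hm0 with hm | hm
  · rw [← hm, hφ.map_zero]
    exact st_re_nonneg hg hcfc0
  · set m := (g a).re with hmdef
    obtain ⟨k, hk⟩ := exists_subgradient hφ.convexOn hm
    have hle : cfc (fun u => (φ m - k*m) + k*u) a ≤ cfc φ a := by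
      refine cfc_mono (fun x hx => ?_) (by fun_prop) hφcont
      have := hk x (hspec x hx); linarith
    have hcalc : cfc (fun u => (φ m - k*m) + k*u) a = algebraMap ℝ A (φ m - k*m) + k • a := by
      rw [cfc_const_add (φ m - k*m) (fun u => k*u) a (by fun_prop) ha',
        cfc_const_mul k (fun u => u) a (by fun_prop), cfc_id' ℝ a ha']
    have h1 := st_mono hg hle
    rw [hcalc, map_add] at h1
    rw [LinearMap.map_smul_of_tower, st_algebraMap hg] at h1
    simp only [Complex.add_re, Complex.ofReal_re, Complex.real_smul, Complex.mul_re,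
      Complex.ofReal_im] at h1
    calc φ m = (φ m - k*m) + k * m := by ring
    _ ≤ (g (cfc φ a)).re := by
        rw [← hmdef] at h1
        convert h1 using 2
        ring

lemma st_re_le_norm (hg : IsState g) {a : A} (ha : 0 ≤ a) : (g a).re ≤ ‖a‖ := by
  have h := st_mono hg (IsSelfAdjoint.of_nonneg ha).le_algebraMap_norm_self
  rwa [st_algebraMap hg, Complex.ofReal_re] at h

lemma st_abs_le_norm (hg : IsState g) (w : A) : ‖g w‖ ≤ ‖w‖ := by
  have h := st_cs hg w 1
  simp only [star_one, one_mul] at h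
  rw [hg.2] at h
  simp only [Complex.one_re, mul_one] at h
  have h2 : (g (star w * w)).re ≤ ‖star w * w‖ := st_re_le_norm hg (star_mul_self_nonneg w)
  rw [CStarRing.norm_star_mul_self] at h2
  refine le_of_pow_le_pow_left₀ two_ne_zero (norm_nonneg w) ?_
  calc ‖g w‖ ^ 2 ≤ (g (star w * w)).re := h
  _ ≤ ‖w‖ * ‖w‖ := h2
  _ = ‖w‖ ^ 2 := by ring

lemma per_state (hg : IsState g) (x y z : A) (hy : ‖y‖ ≤ 1) {φ : ℝ → ℝ} (hφ : IsOrlicz φ) :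
    φ (‖g (x * y * star z)‖) ≤
      (‖y‖ / 2) * ‖cfc φ (x * star x) + cfc φ (z * star z)‖ := by
  have hφ0 : ∀ u : ℝ, 0 ≤ u → 0 ≤ φ u := fun u hu =>
    hφ.map_zero ▸ hφ.monotoneOn (Set.self_mem_Ici) hu hu
  set p := (g (x * star x)).re with hp
  set q := (g (z * star z)).re with hq
  have hp0 : 0 ≤ p := st_re_nonneg hg (mul_star_self_nonneg x)
  have hq0 : 0 ≤ q := st_re_nonneg hg (mul_star_self_nonneg z)
  have hy0 : 0 ≤ ‖y‖ := norm_nonneg y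
  -- Cauchy–Schwarz
  have hcs := st_cs hg (y * star z) (star x)
  rw [star_star] at hcs
  have hw : x * (y * star z) = x * y * star z := by rw [mul_assoc]
  rw [hw] at hcs
  -- bound middle term
  have hmid : (g (star (y * star z) * (y * star z))).re ≤ (‖y‖ * ‖y‖) * q := by
    have h1 : star y * y ≤ algebraMap ℝ A (‖y‖ * ‖y‖) := by
      have := (IsSelfAdjoint.star_mul_self y).le_algebraMap_norm_self
      rwa [CStarRing.norm_star_mul_self] at this
    have h2 := star_left_conjugate_le_conjugate h1 (star z)
    rw [star_star] at h2
    have h3 : z * (star y * y) * star z = star (y * star z) * (y * star z) := by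
      rw [star_mul, star_star]; noncomm_ring
    have h4 : z * algebraMap ℝ A (‖y‖ * ‖y‖) * star z = (‖y‖ * ‖y‖) • (z * star z) := by
      rw [Algebra.algebraMap_eq_smul_one, mul_smul_comm, mul_one, smul_mul_assoc]
    rw [h3, h4] at h2
    have h5 := st_mono hg h2
    rwa [LinearMap.map_smul_of_tower, Complex.real_smul, Complex.mul_re, Complex.ofReal_re,
      Complex.ofReal_im, zero_mul, sub_zero, ← hq] at h5
  have habs2 : ‖g (x * y * star z)‖ ^ 2 ≤ (‖y‖ * ‖y‖) * q * p :=
    hcs.trans (mul_le_mul_of_nonneg_right hmid hp0)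
  -- |g w| ≤ ‖y‖ (p+q)/2
  have hle : ‖g (x * y * star z)‖ ≤ ‖y‖ * ((p + q) / 2) := by
    refine le_of_pow_le_pow_left₀ two_ne_zero (by positivity) ?_
    refine habs2.trans ?_
    nlinarith [sq_nonneg (p - q), sq_nonneg ‖y‖]
  -- φ monotone
  have step1 : φ (‖g (x * y * star z)‖) ≤ φ (‖y‖ * ((p + q) / 2)) :=
    hφ.monotoneOn (Set.mem_Ici.mpr (by positivity)) (Set.mem_Ici.mpr (by positivity)) hle
  -- φ(c t) ≤ c φ(t)
  have step2 : φ (‖y‖ * ((p + q) / 2)) ≤ ‖y‖ * φ ((p + q) / 2) := by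
    have := hφ.convexOn.2 (Set.mem_Ici.mpr (by positivity : (0:ℝ) ≤ (p+q)/2))
      Set.self_mem_Ici hy0 (by linarith : (0:ℝ) ≤ 1 - ‖y‖) (by ring : ‖y‖ + (1 - ‖y‖) = 1)
    simp only [smul_eq_mul, mul_zero, add_zero, hφ.map_zero] at this
    linarith
  -- midpoint convexity
  have step3 : φ ((p + q) / 2) ≤ (φ p + φ q) / 2 := by
    have := hφ.convexOn.2 (Set.mem_Ici.mpr hp0) (Set.mem_Ici.mpr hq0)
      (by norm_num : (0:ℝ) ≤ 1/2) (by norm_num : (0:ℝ) ≤ 1/2) (by norm_num : (1:ℝ)/2 + 1/2 = 1)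
    simp only [smul_eq_mul] at this
    calc φ ((p + q)/2) = φ (1/2 * p + 1/2 * q) := by ring_nf
    _ ≤ 1/2 * φ p + 1/2 * φ q := this
    _ = (φ p + φ q)/2 := by ring
  -- Jensen
  have hj1 : φ p ≤ (g (cfc φ (x * star x))).re := st_jensen hg (mul_star_self_nonneg x) hφ
  have hj2 : φ q ≤ (g (cfc φ (z * star z))).re := st_jensen hg (mul_star_self_nonneg z) hφ
  -- final norm bound
  set P := cfc φ (x * star x) + cfc φ (z * star z) with hP
  have hP0 : 0 ≤ P := by
    refine add_nonneg (cfc_nonneg fun u hu => hφ0 u ?_) (cfc_nonneg fun u hu => hφ0 u ?_)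
    · exact spectrum_nonneg_of_nonneg (mul_star_self_nonneg x) hu
    · exact spectrum_nonneg_of_nonneg (mul_star_self_nonneg z) hu
  have hPnorm : (g P).re ≤ ‖P‖ := st_re_le_norm hg hP0
  have hsum : (g (cfc φ (x * star x))).re + (g (cfc φ (z * star z))).re = (g P).re := by
    rw [hP, map_add, Complex.add_re]
  calc φ (‖g (x * y * star z)‖)
      ≤ ‖y‖ * ((φ p + φ q) / 2) := by
        refine step1.trans (step2.trans ?_)
        exact mul_le_mul_of_nonneg_left (by linarith) hy0
  _ ≤ ‖y‖ * ((g P).re / 2) := by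
        refine mul_le_mul_of_nonneg_left ?_ hy0
        rw [← hsum]; linarith
  _ ≤ (‖y‖ / 2) * ‖P‖ := by
        rw [div_mul_eq_mul_div, mul_div_assoc]
        exact mul_le_mul_of_nonneg_left (by linarith) hy0
end StateAux

open StateAux in
/-- `φ(v(x y z*)) ≤ (‖y‖/2) ‖φ(x x*) + φ(z z*)‖` when `‖y‖ ≤ 1`. -/
theorem stmt16 (x y z : A) (hy : ‖y‖ ≤ 1) (φ : ℝ → ℝ) (hφ : IsOrlicz φ) :
    φ (nr (x * y * star z)) ≤ (‖y‖ / 2) * ‖cfc φ (x * star x) + cfc φ (z * star z)‖ := by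
  set w := x * y * star z with hw
  set S : Set ℝ := {r : ℝ | ∃ g : A →ₗ[ℂ] ℂ, IsState g ∧ r = ‖g w‖} with hS
  have hRHS0 : 0 ≤ (‖y‖ / 2) * ‖cfc φ (x * star x) + cfc φ (z * star z)‖ := by positivity
  rcases S.eq_empty_or_nonempty with hSe | hSne
  · rw [nr, ← hS, hSe, Real.sSup_empty, hφ.map_zero]
    exact hRHS0
  · have hbdd : BddAbove S := by
      refine ⟨‖w‖, ?_⟩
      rintro r ⟨g, hg, rfl⟩
      exact st_abs_le_norm hg w
    have hS0 : ∀ r ∈ S, (0:ℝ) ≤ r := by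
      rintro r ⟨g, hg, rfl⟩
      exact norm_nonneg _
    have hc0 : 0 ≤ sSup S := by
      obtain ⟨r, hr⟩ := hSne
      exact (hS0 r hr).trans (le_csSup hbdd hr)
    obtain ⟨u, -, hu2, hu3⟩ := exists_seq_tendsto_sSup hSne hbdd
    have hbound : ∀ n, φ (u n) ≤ (‖y‖ / 2) * ‖cfc φ (x * star x) + cfc φ (z * star z)‖ := by
      intro n
      obtain ⟨g, hg, hgn⟩ := hu3 n
      rw [hgn]
      exact per_state hg x y z hy hφ
    have htend : Filter.Tendsto (fun n => φ (u n)) Filter.atTop (nhds (φ (sSup S))) := by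
      have hcw : ContinuousWithinAt φ (Set.Ici 0) (sSup S) :=
        hφ.continuousOn _ (Set.mem_Ici.mpr hc0)
      refine hcw.tendsto.comp ?_
      refine tendsto_nhdsWithin_of_tendsto_nhds_of_eventually_within u hu2 ?_
      exact Filter.Eventually.of_forall fun n => Set.mem_Ici.mpr (hS0 _ (hu3 n))
    have : nr w = sSup S := by rw [nr, ← hS]
    rw [this]
    exact le_of_tendsto htend (Filter.Eventually.of_forall hbound)

end
end

section
/- Let A be a unital C*-algebra, x, z positive elements of A, y ∈ A, and φ a sub-multiplicative Orlicz function (φ(uv) ≤ φ(u)·φ(v) for all u, v ≥ 0). Then for every real r ≥ 2 and every 0 ≤ α ≤ 1, φ(v(x^α y z^{1−α})^r) ≤ φ(‖y‖^r)·‖α·φ(x^r) + (1 − α)·φ(z^r)‖, where the real powers x^α, z^{1−α}, x^r, z^r and the elements φ(x^r), φ(z^r) are taken by continuous functional calculus on the positive elements x and z. -/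
open scoped ComplexOrder

section

variable {A : Type*} [CStarAlgebra A] [PartialOrder A] [StarOrderedRing A]

namespace Stmt17Aux

variable {g : A →ₗ[ℂ] ℂ}

lemma pos (hg : IsState g) {w : A} (hw : 0 ≤ w) : 0 ≤ g w := by
  obtain ⟨s, hs, rfl⟩ : ∃ s : A, IsSelfAdjoint s ∧ s * s = w :=
    ⟨CFC.sqrt w, (CFC.sqrt_nonneg (a := w)).isSelfAdjoint, CFC.sqrt_mul_sqrt_self w⟩
  simpa [hs.star_eq] using hg.1 s

lemma im_eq (hg : IsState g) (u v : A) :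
    (g (star u * v)).im + (g (star v * u)).im = 0 := by
  have h := pos hg (star_mul_self_nonneg (u + v))
  have h1 := pos hg (star_mul_self_nonneg u)
  have h2 := pos hg (star_mul_self_nonneg v)
  rw [Complex.nonneg_iff] at h h1 h2
  have hexp : star (u + v) * (u + v)
      = star u * u + (star u * v + (star v * u + star v * v)) := by
    rw [star_add]; noncomm_ring
  rw [hexp, map_add, map_add, map_add] at h
  simp only [Complex.add_im] at h
  linarith [h.2, h1.2, h2.2]

lemma herm (hg : IsState g) (a b : A) :
    g (star b * a) = starRingEnd ℂ (g (star a * b)) := by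
  have k1 := im_eq hg a b
  have k2 := im_eq hg a (Complex.I • b)
  have e1 : star a * (Complex.I • b) = Complex.I • (star a * b) := by
    rw [mul_smul_comm]
  have e2 : star (Complex.I • b) * a = (-Complex.I) • (star b * a) := by
    rw [star_smul, smul_mul_assoc]
    simp [Complex.conj_I]
  rw [e1, e2, map_smul, map_smul] at k2
  simp only [smul_eq_mul, Complex.mul_im, Complex.I_re, Complex.I_im, Complex.neg_im,
    Complex.neg_re] at k2
  apply Complex.ext <;> simp only [Complex.conj_re, Complex.conj_im] <;> linarith

lemma conj_symm (hg : IsState g) (m : A) : g (star m) = starRingEnd ℂ (g m) := by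
  have h := herm hg m 1
  simp only [star_one, one_mul, mul_one] at h
  rw [h]
  simp

lemma re_mono (hg : IsState g) {v w : A} (h : v ≤ w) : (g v).re ≤ (g w).re := by
  have h0 := pos hg (sub_nonneg.mpr h)
  rw [map_sub, Complex.nonneg_iff, Complex.sub_re] at h0
  linarith [h0.1]

lemma re_nonneg (hg : IsState g) {w : A} (hw : 0 ≤ w) : 0 ≤ (g w).re := by
  have := pos hg hw
  rw [Complex.nonneg_iff] at this
  exact this.1

lemma re_le_norm (hg : IsState g) {w : A} (hw : 0 ≤ w) : (g w).re ≤ ‖w‖ := by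
  have h1 : w ≤ algebraMap ℝ A ‖w‖ := IsSelfAdjoint.le_algebraMap_norm_self hw.isSelfAdjoint
  have h2 := re_mono hg h1
  rw [Algebra.algebraMap_eq_smul_one] at h2
  rw [g.map_smul_of_tower, hg.2] at h2
  simpa using h2


lemma cs (hg : IsState g) (c d : A) :
    ‖g (star c * d)‖ ^ 2 ≤ (g (star c * c)).re * (g (star d * d)).re := by
  have hcc := re_nonneg hg (star_mul_self_nonneg c)
  have hdd := re_nonneg hg (star_mul_self_nonneg d)
  set γ := g (star c * d) with hγ
  rcases eq_or_ne γ 0 with h0 | h0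
  · rw [h0]
    simpa using mul_nonneg hcc hdd
  have habs : (0:ℝ) < ‖γ‖ := norm_pos_iff.mpr h0
  set u : ℂ := γ / (‖γ‖ : ℂ) with hu
  have hcu : starRingEnd ℂ u * γ = (‖γ‖ : ℂ) := by
    rw [hu, map_div₀, Complex.conj_ofReal, div_mul_eq_mul_div, mul_comm, Complex.mul_conj,
      Complex.normSq_eq_norm_sq]
    rw [pow_two, Complex.ofReal_mul, mul_div_assoc,
      div_self (by exact_mod_cast habs.ne'), mul_one]
  set c' := u • c with hc'
  have hsc' : star c' = starRingEnd ℂ u • star c := by rw [hc', star_smul]; rfl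
  have hcc' : g (star c' * c') = g (star c * c) := by
    rw [hsc', hc', smul_mul_assoc, mul_smul_comm, map_smul, map_smul, smul_eq_mul, smul_eq_mul,
      ← mul_assoc]
    have : starRingEnd ℂ u * u = 1 := by
      rw [hu, map_div₀, Complex.conj_ofReal, div_mul_div_comm, mul_comm (starRingEnd ℂ γ) γ,
        Complex.mul_conj, Complex.normSq_eq_norm_sq, ← Complex.ofReal_mul, pow_two, div_self]
      exact_mod_cast (mul_pos habs habs).ne'
    rw [this, one_mul]
  have hγ' : g (star c' * d) = (‖γ‖ : ℂ) := by
    rw [hsc', smul_mul_assoc, map_smul, smul_eq_mul, ← hγ, hcu]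
  have hdc : g (star d * c') = (‖γ‖ : ℂ) := by
    rw [herm hg c' d, hγ', Complex.conj_ofReal]
  set A0 := (g (star c * c)).re with hA0
  set B0 := (g (star d * d)).re with hB0
  have hq : ∀ t : ℝ, 0 ≤ A0 * (t * t) + (2 * ‖γ‖) * t + B0 := by
    intro t
    have h := re_nonneg hg (star_mul_self_nonneg ((t:ℂ) • c' + d))
    have hexp : star ((t:ℂ) • c' + d) * ((t:ℂ) • c' + d)
        = ((t:ℂ) * (t:ℂ)) • (star c' * c') + ((t:ℂ) • (star c' * d)
            + ((t:ℂ) • (star d * c') + star d * d)) := by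
      rw [star_add, star_smul]
      simp only [Complex.star_def, Complex.conj_ofReal]
      simp only [add_mul, mul_add, smul_add, smul_mul_assoc, mul_smul_comm, smul_smul]
      abel
    rw [hexp, map_add, map_add, map_add, map_smul, map_smul, map_smul, hcc', hγ', hdc] at h
    simp only [smul_eq_mul, Complex.add_re, Complex.mul_re, Complex.ofReal_re, Complex.ofReal_im,
      Complex.mul_im] at h
    nlinarith [h]
  have hd := discrim_le_zero hq
  rw [discrim] at hd
  nlinarith [hd, habs]

lemma abs_le_norm (hg : IsState g) (m : A) : ‖g m‖ ≤ ‖m‖ := by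
  have h := cs hg 1 m
  rw [star_one, one_mul, one_mul, hg.2] at h
  have h2 : (g (star m * m)).re ≤ ‖m‖ * ‖m‖ := by
    have := re_le_norm hg (star_mul_self_nonneg m)
    rwa [CStarRing.norm_star_mul_self] at this
  simp only [Complex.one_re, one_mul] at h
  nlinarith [norm_nonneg (g m), norm_nonneg m, h.trans h2]


lemma contRpow {q : ℝ} (hq : 0 ≤ q) : Continuous fun t : ℝ => t ^ q :=
  continuous_iff_continuousAt.mpr fun t => Real.continuousAt_rpow_const t q (Or.inr hq)

lemma exists_support {f : ℝ → ℝ} (hc : ConvexOn ℝ (Set.Ici 0) f)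
    (hm : MonotoneOn f (Set.Ici 0)) {s : ℝ} (hs : 0 ≤ s) :
    ∃ d : ℝ, ∀ t : ℝ, 0 ≤ t → f s + d * (t - s) ≤ f t := by
  set T : Set ℝ := (fun t => (f t - f s) / (t - s)) '' Set.Ioi s with hT
  have hTne : T.Nonempty := ⟨_, ⟨s + 1, by simp, rfl⟩⟩
  have hTbd : BddBelow T := by
    refine ⟨0, ?_⟩
    rintro _ ⟨t, ht, rfl⟩
    have ht' : s < t := ht
    have hft : f s ≤ f t := hm hs (hs.trans ht'.le) ht'.le
    have : (0:ℝ) < t - s := by linarith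
    exact div_nonneg (by linarith) (by linarith)
  refine ⟨sInf T, fun t ht => ?_⟩
  rcases lt_trichotomy t s with h | rfl | h
  · have hd : (f s - f t) / (s - t) ≤ sInf T := by
      refine le_csInf hTne ?_
      rintro _ ⟨v, hv, rfl⟩
      have hv' : s < v := hv
      exact hc.slope_mono_adjacent ht (hs.trans hv'.le) h hv'
    have hst : (0:ℝ) < s - t := by linarith
    rw [div_le_iff₀ hst] at hd
    nlinarith [hd]
  · simp
  · have hd : sInf T ≤ (f t - f s) / (t - s) := csInf_le hTbd ⟨t, h, rfl⟩
    have hst : (0:ℝ) < t - s := by linarith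
    rw [le_div_iff₀ hst] at hd
    linarith

lemma affine_eval (hg : IsState g) (c d : ℝ) {w : A} (hw : 0 ≤ w) :
    (g (cfc (fun t : ℝ => c + d * t) w)).re = c + d * (g w).re := by
  rw [cfc_const_add c (fun t : ℝ => d * t) w (by fun_prop) hw.isSelfAdjoint,
    cfc_const_mul_id d w hw.isSelfAdjoint, map_add,
    Algebra.algebraMap_eq_smul_one, g.map_smul_of_tower, g.map_smul_of_tower, hg.2]
  simp [Complex.real_smul]

lemma jensen_convex (hg : IsState g) {f : ℝ → ℝ} (hc : ConvexOn ℝ (Set.Ici 0) f)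
    (hm : MonotoneOn f (Set.Ici 0)) (hcont : ContinuousOn f (Set.Ici 0))
    {w : A} (hw : 0 ≤ w) : f ((g w).re) ≤ (g (cfc f w)).re := by
  have hs : 0 ≤ (g w).re := re_nonneg hg hw
  obtain ⟨d, hd⟩ := exists_support hc hm hs
  set s := (g w).re
  have hspec : ∀ t ∈ spectrum ℝ w, (0:ℝ) ≤ t := fun t ht => spectrum_nonneg_of_nonneg hw ht
  have h1 : cfc (fun t : ℝ => (f s - d * s) + d * t) w ≤ cfc f w := by
    refine cfc_mono (fun t ht => ?_) (by fun_prop) (hcont.mono fun t ht => hspec t ht)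
    have := hd t (hspec t ht)
    linarith
  have h2 := re_mono hg h1
  rwa [affine_eval hg _ _ hw, show f s - d * s + d * s = f s by ring] at h2

lemma jensen_rpow (hg : IsState g) {β : ℝ} (hβ0 : 0 ≤ β) (hβ1 : β ≤ 1)
    {w : A} (hw : 0 ≤ w) :
    (g (cfc (fun t : ℝ => t ^ β) w)).re ≤ ((g w).re) ^ β := by
  have hs : 0 ≤ (g w).re := re_nonneg hg hw
  have hspec : ∀ t ∈ spectrum ℝ w, (0:ℝ) ≤ t := fun t ht => spectrum_nonneg_of_nonneg hw ht
  rcases eq_or_lt_of_le hβ0 with hβ | hβ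
  · rw [← hβ]
    have h1 : cfc (fun t : ℝ => t ^ (0:ℝ)) w = 1 := by
      rw [show (fun t : ℝ => t ^ (0:ℝ)) = fun _ : ℝ => (1:ℝ) from funext fun t => Real.rpow_zero t]
      exact cfc_const_one ℝ w hw.isSelfAdjoint
    rw [h1, hg.2, Real.rpow_zero, Complex.one_re]
  · have tangent : ∀ ε : ℝ, 0 < ε →
        (g (cfc (fun t : ℝ => t ^ β) w)).re ≤ (1 - β) * ε ^ β + β * ε ^ (β - 1) * (g w).re := by
      intro ε hε
      have hεp : (0:ℝ) ≤ ε ^ (β - 1) := Real.rpow_nonneg hε.le _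
      have h3 : ε ^ (β - 1) * ε = ε ^ β := by
        nth_rewrite 2 [show ε = ε ^ (1:ℝ) from (Real.rpow_one ε).symm]
        rw [← Real.rpow_add hε]; ring_nf
      have hpt : ∀ t : ℝ, 0 ≤ t →
          t ^ β ≤ ((1 - β) * ε ^ β) + (β * ε ^ (β - 1)) * t := by
        intro t ht
        have h1 : t ^ β * ε ^ (1 - β) ≤ β * t + (1 - β) * ε :=
          Real.geom_mean_le_arith_mean2_weighted hβ0 (by linarith) ht hε.le (by ring)
        have h2 : ε ^ (1 - β) * ε ^ (β - 1) = 1 := by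
          rw [← Real.rpow_add hε]; norm_num
        calc t ^ β = t ^ β * (ε ^ (1 - β) * ε ^ (β - 1)) := by rw [h2, mul_one]
          _ = (t ^ β * ε ^ (1 - β)) * ε ^ (β - 1) := by ring
          _ ≤ (β * t + (1 - β) * ε) * ε ^ (β - 1) := mul_le_mul_of_nonneg_right h1 hεp
          _ = β * ε ^ (β - 1) * t + (1 - β) * (ε ^ (β - 1) * ε) := by ring
          _ = ((1 - β) * ε ^ β) + (β * ε ^ (β - 1)) * t := by rw [h3]; ring
      have h1 : cfc (fun t : ℝ => t ^ β) w
          ≤ cfc (fun t : ℝ => ((1 - β) * ε ^ β) + (β * ε ^ (β - 1)) * t) w := by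
        refine cfc_mono (fun t ht => hpt t (hspec t ht))
          ((contRpow hβ0).continuousOn) (by fun_prop)
      have h2 := re_mono hg h1
      rwa [affine_eval hg _ _ hw] at h2
    rcases eq_or_lt_of_le hs with hs0 | hs0
    · rw [← hs0, Real.zero_rpow hβ.ne']
      have hb : ∀ δ : ℝ, 0 < δ → (g (cfc (fun t : ℝ => t ^ β) w)).re ≤ 0 + δ := by
        intro δ hδ
        set ε := δ ^ (1/β) with hε
        have hεpos : 0 < ε := Real.rpow_pos_of_pos hδ _
        have hεβ : ε ^ β = δ := by
          rw [hε, ← Real.rpow_mul hδ.le, one_div, inv_mul_cancel₀ hβ.ne', Real.rpow_one]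
        have := tangent ε hεpos
        rw [← hs0] at this
        have hεβnn : 0 ≤ ε ^ β := Real.rpow_nonneg hεpos.le _
        nlinarith [this]
      linarith [le_of_forall_pos_le_add hb]
    · have := tangent _ hs0
      have h3 : (g w).re ^ (β - 1) * (g w).re = (g w).re ^ β := by
        nth_rewrite 2 [show (g w).re = (g w).re ^ (1:ℝ) from (Real.rpow_one _).symm]
        rw [← Real.rpow_add hs0]; ring_nf
      nlinarith [this, h3]


lemma rpow_sq {α' : ℝ} (hα' : 0 ≤ α') {t : ℝ} (ht : 0 ≤ t) :
    t ^ α' * t ^ α' = t ^ (2 * α') := by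
  rcases ht.eq_or_lt with h | h
  · rcases eq_or_ne α' 0 with h0 | h0
    · simp [← h, h0]
    · rw [← h, Real.zero_rpow h0, Real.zero_rpow (mul_ne_zero two_ne_zero h0), mul_zero]
  · rw [← Real.rpow_add h]; ring_nf

lemma cfc_rpow_mul_self (x : A) (hx : 0 ≤ x) {α' : ℝ} (hα' : 0 ≤ α') :
    cfc (fun t : ℝ => t ^ α') x * cfc (fun t : ℝ => t ^ α') x
      = cfc (fun t : ℝ => t ^ (2 * α')) x := by
  rw [← cfc_mul _ _ x ((contRpow hα').continuousOn) ((contRpow hα').continuousOn)]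
  exact cfc_congr fun t ht => rpow_sq hα' (spectrum_nonneg_of_nonneg hx ht)

lemma cfc_rpow_comp (x : A) (hx : 0 ≤ x) {β r : ℝ} (hβ : 0 ≤ β) (hr : 0 < r) :
    cfc (fun t : ℝ => t ^ (β * r)) x
      = cfc (fun t : ℝ => t ^ β) (cfc (fun t : ℝ => t ^ r) x) := by
  rw [← cfc_comp' (fun t : ℝ => t ^ β) (fun t : ℝ => t ^ r) x
      ((contRpow hβ).continuousOn) ((contRpow hr.le).continuousOn) hx.isSelfAdjoint]
  refine cfc_congr fun t ht => ?_
  have ht' : (0:ℝ) ≤ t := spectrum_nonneg_of_nonneg hx ht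
  rw [mul_comm, Real.rpow_mul ht']

end Stmt17Aux

namespace Stmt17Aux

lemma phi_nonneg {φ : ℝ → ℝ} (hφ : IsOrlicz φ) {u : ℝ} (hu : 0 ≤ u) : 0 ≤ φ u := by
  have := hφ.monotoneOn (Set.mem_Ici.mpr (le_refl (0:ℝ))) (Set.mem_Ici.mpr hu) hu
  rw [hφ.map_zero] at this
  exact this

lemma state_bound {g : A →ₗ[ℂ] ℂ} (x z : A) (hx : 0 ≤ x) (hz : 0 ≤ z) (y : A)
    (φ : ℝ → ℝ) (hφ : IsOrlicz φ)
    (hsub : ∀ u v : ℝ, 0 ≤ u → 0 ≤ v → φ (u * v) ≤ φ u * φ v)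
    (r : ℝ) (hr : 2 ≤ r) (α : ℝ) (hα0 : 0 ≤ α) (hα1 : α ≤ 1)
    (hg : IsState g) :
    φ (‖g (cfc (fun t : ℝ => t ^ α) x * y * cfc (fun t : ℝ => t ^ (1 - α)) z)‖ ^ r) ≤
      φ (‖y‖ ^ r) *
        ‖(α : ℂ) • cfc φ (cfc (fun t : ℝ => t ^ r) x) +
          ((1 - α : ℝ) : ℂ) • cfc φ (cfc (fun t : ℝ => t ^ r) z)‖ := by
  have hr0 : (0:ℝ) < r := lt_of_lt_of_le two_pos hr
  set Xα := cfc (fun t : ℝ => t ^ α) x with hXα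
  set Zb := cfc (fun t : ℝ => t ^ (1 - α)) z with hZb
  set X := cfc (fun t : ℝ => t ^ r) x with hXdef
  set Z := cfc (fun t : ℝ => t ^ r) z with hZdef
  have hXαsa : IsSelfAdjoint Xα := cfc_predicate _ x
  have hZbsa : IsSelfAdjoint Zb := cfc_predicate _ z
  have hX : (0:A) ≤ X := cfc_nonneg fun t ht =>
    Real.rpow_nonneg (spectrum_nonneg_of_nonneg hx ht) r
  have hZ : (0:A) ≤ Z := cfc_nonneg fun t ht =>
    Real.rpow_nonneg (spectrum_nonneg_of_nonneg hz ht) r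
  set p := (g X).re with hpdef
  set q := (g Z).re with hqdef
  have hp : 0 ≤ p := re_nonneg hg hX
  have hq : 0 ≤ q := re_nonneg hg hZ
  set β₁ := 2 * α / r with hβ₁def
  set β₂ := 2 * (1 - α) / r with hβ₂def
  have hβ₁0 : 0 ≤ β₁ := by positivity
  have hβ₁1 : β₁ ≤ 1 := by rw [hβ₁def, div_le_one hr0]; linarith
  have hβ₂0 : 0 ≤ β₂ := by
    have : (0:ℝ) ≤ 1 - α := by linarith
    positivity
  have hβ₂1 : β₂ ≤ 1 := by rw [hβ₂def, div_le_one hr0]; linarith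
  have key1 : Xα * y * Zb = star (star (Xα * y)) * Zb := by rw [star_star]
  have hcs := cs hg (star (Xα * y)) Zb
  have hc2 : star (star (Xα * y)) * star (Xα * y) = Xα * (y * star y) * Xα := by
    rw [star_star, star_mul, hXαsa.star_eq]
    simp [mul_assoc]
  have hyy : y * star y ≤ algebraMap ℝ A (‖y‖ ^ 2) := by
    have h1 : y * star y ≤ algebraMap ℝ A ‖y * star y‖ :=
      IsSelfAdjoint.le_algebraMap_norm_self (mul_star_self_nonneg y).isSelfAdjoint
    rwa [CStarRing.norm_self_mul_star, ← pow_two] at h1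
  have hconj : Xα * (y * star y) * Xα ≤ (‖y‖ ^ 2) • (Xα * Xα) := by
    have h2 := star_left_conjugate_le_conjugate hyy Xα
    rw [hXαsa.star_eq, Algebra.algebraMap_eq_smul_one] at h2
    calc Xα * (y * star y) * Xα ≤ Xα * ((‖y‖ ^ 2) • (1:A)) * Xα := h2
      _ = (‖y‖ ^ 2) • (Xα * Xα) := by
          rw [mul_smul_comm, mul_one, smul_mul_assoc]
  have hXX : Xα * Xα = cfc (fun t : ℝ => t ^ β₁) X := by
    rw [hXα, cfc_rpow_mul_self x hx hα0, show 2 * α = β₁ * r by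
      rw [hβ₁def]; field_simp, cfc_rpow_comp x hx hβ₁0 hr0]
  have hZZ : Zb * Zb = cfc (fun t : ℝ => t ^ β₂) Z := by
    rw [hZb, cfc_rpow_mul_self z hz (by linarith : (0:ℝ) ≤ 1 - α), show 2 * (1 - α) = β₂ * r by
      rw [hβ₂def]; field_simp, cfc_rpow_comp z hz hβ₂0 hr0]
  have h1 : (g (star (star (Xα * y)) * star (Xα * y))).re ≤ ‖y‖ ^ 2 * p ^ β₁ := by
    have ha := re_mono hg (hc2.le.trans hconj)
    have hb : (g ((‖y‖ ^ 2) • (Xα * Xα))).re = ‖y‖ ^ 2 * (g (Xα * Xα)).re := by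
      rw [g.map_smul_of_tower, Complex.real_smul, Complex.re_ofReal_mul]
    rw [hb, hXX] at ha
    have hc := jensen_rpow hg hβ₁0 hβ₁1 hX
    nlinarith [ha, hc, sq_nonneg ‖y‖]
  have h2 : (g (star Zb * Zb)).re ≤ q ^ β₂ := by
    rw [hZbsa.star_eq, hZZ]
    exact jensen_rpow hg hβ₂0 hβ₂1 hZ
  set m := ‖g (Xα * y * Zb)‖ with hmdef
  have hm : 0 ≤ m := norm_nonneg _
  have habs2 : m ^ 2 ≤ ‖y‖ ^ 2 * p ^ β₁ * q ^ β₂ := by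
    rw [hmdef, key1]
    refine hcs.trans ?_
    exact mul_le_mul h1 h2 (re_nonneg hg (star_mul_self_nonneg Zb)) (by positivity)
  have hmr : m ^ r ≤ ‖y‖ ^ r * (p ^ α * q ^ (1 - α)) := by
    have step := Real.rpow_le_rpow (by positivity) habs2 (by positivity : (0:ℝ) ≤ r / 2)
    have e1 : ((m ^ 2 : ℝ)) ^ (r / 2 : ℝ) = m ^ r := by
      rw [← Real.rpow_natCast m 2, ← Real.rpow_mul hm]
      congr 1
      push_cast
      ring
    have e2 : ((‖y‖ ^ 2 * p ^ β₁ * q ^ β₂ : ℝ)) ^ (r / 2 : ℝ)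
        = ‖y‖ ^ r * (p ^ α * q ^ (1 - α)) := by
      rw [Real.mul_rpow (by positivity) (by positivity),
        Real.mul_rpow (by positivity) (by positivity),
        ← Real.rpow_natCast ‖y‖ 2, ← Real.rpow_mul (norm_nonneg y),
        ← Real.rpow_mul hp, ← Real.rpow_mul hq]
      rw [show (2:ℕ) * (r / 2) = r by push_cast; ring,
        show β₁ * (r / 2) = α by rw [hβ₁def]; field_simp,
        show β₂ * (r / 2) = 1 - α by rw [hβ₂def]; field_simp]
      ring
    rw [e1, e2] at step
    exact step
  have hamgm : p ^ α * q ^ (1 - α) ≤ α * p + (1 - α) * q :=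
    Real.geom_mean_le_arith_mean2_weighted hα0 (by linarith) hp hq (by ring)
  have hφy : 0 ≤ φ (‖y‖ ^ r) := phi_nonneg hφ (Real.rpow_nonneg (norm_nonneg y) r)
  have hyr : 0 ≤ ‖y‖ ^ (r:ℝ) := Real.rpow_nonneg (norm_nonneg y) r
  have hsum : 0 ≤ α * p + (1 - α) * q :=
    add_nonneg (mul_nonneg hα0 hp) (mul_nonneg (by linarith) hq)
  have hφ1 : φ (m ^ r) ≤ φ (‖y‖ ^ r * (α * p + (1 - α) * q)) := by
    refine hφ.monotoneOn (Set.mem_Ici.mpr (Real.rpow_nonneg hm r))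
      (Set.mem_Ici.mpr (mul_nonneg hyr hsum)) ?_
    refine hmr.trans ?_
    exact mul_le_mul_of_nonneg_left hamgm hyr
  have hφ2 : φ (‖y‖ ^ r * (α * p + (1 - α) * q)) ≤ φ (‖y‖ ^ r) * φ (α * p + (1 - α) * q) :=
    hsub _ _ hyr hsum
  have hφ3 : φ (α * p + (1 - α) * q) ≤ α * φ p + (1 - α) * φ q := by
    have := hφ.convexOn.2 (Set.mem_Ici.mpr hp) (Set.mem_Ici.mpr hq) hα0
      (by linarith : (0:ℝ) ≤ 1 - α) (by ring)
    simpa [smul_eq_mul] using this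
  have hφ4 : φ p ≤ (g (cfc φ X)).re :=
    jensen_convex hg hφ.convexOn hφ.monotoneOn hφ.continuousOn hX
  have hφ5 : φ q ≤ (g (cfc φ Z)).re :=
    jensen_convex hg hφ.convexOn hφ.monotoneOn hφ.continuousOn hZ
  set E := (α : ℂ) • cfc φ X + ((1 - α : ℝ) : ℂ) • cfc φ Z with hEdef
  have h6 : (g E).re = α * (g (cfc φ X)).re + (1 - α) * (g (cfc φ Z)).re := by
    rw [hEdef, map_add, map_smul, map_smul]
    simp [Complex.add_re, smul_eq_mul, Complex.re_ofReal_mul]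
  have h9 : α * φ p + (1 - α) * φ q ≤ ‖E‖ := by
    have h7 : (g E).re ≤ ‖g E‖ := Complex.re_le_norm _
    have h8 := abs_le_norm hg E
    have h10 : α * φ p + (1 - α) * φ q
        ≤ α * (g (cfc φ X)).re + (1 - α) * (g (cfc φ Z)).re :=
      add_le_add (mul_le_mul_of_nonneg_left hφ4 hα0)
        (mul_le_mul_of_nonneg_left hφ5 (by linarith))
    linarith [h10, h7, h8, h6]
  calc φ (m ^ r) ≤ φ (‖y‖ ^ r) * φ (α * p + (1 - α) * q) := hφ1.trans hφ2
    _ ≤ φ (‖y‖ ^ r) * (α * φ p + (1 - α) * φ q) := mul_le_mul_of_nonneg_left hφ3 hφy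
    _ ≤ φ (‖y‖ ^ r) * ‖E‖ := mul_le_mul_of_nonneg_left h9 hφy

end Stmt17Aux

/-- for positive `x, z`, a sub-multiplicative Orlicz function `φ`,
`r ≥ 2` and `0 ≤ α ≤ 1`, `φ(v(x^α y z^{1-α})^r) ≤ φ(‖y‖^r) ‖α φ(x^r) + (1-α) φ(z^r)‖`. -/
theorem stmt17 (x z : A) (hx : 0 ≤ x) (hz : 0 ≤ z) (y : A)
    (φ : ℝ → ℝ) (hφ : IsOrlicz φ)
    (hsub : ∀ u v : ℝ, 0 ≤ u → 0 ≤ v → φ (u * v) ≤ φ u * φ v)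
    (r : ℝ) (hr : 2 ≤ r) (α : ℝ) (hα0 : 0 ≤ α) (hα1 : α ≤ 1) :
    φ (nr (cfc (fun t : ℝ => t ^ α) x * y * cfc (fun t : ℝ => t ^ (1 - α)) z) ^ r) ≤
      φ (‖y‖ ^ r) *
        ‖(α : ℂ) • cfc φ (cfc (fun t : ℝ => t ^ r) x) +
          ((1 - α : ℝ) : ℂ) • cfc φ (cfc (fun t : ℝ => t ^ r) z)‖ := by
  have hr0 : (0:ℝ) < r := lt_of_lt_of_le two_pos hr
  set a := cfc (fun t : ℝ => t ^ α) x * y * cfc (fun t : ℝ => t ^ (1 - α)) z with hadef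
  set E := (α : ℂ) • cfc φ (cfc (fun t : ℝ => t ^ r) x) +
      ((1 - α : ℝ) : ℂ) • cfc φ (cfc (fun t : ℝ => t ^ r) z) with hEdef
  set S := {ρ : ℝ | ∃ g : A →ₗ[ℂ] ℂ, IsState g ∧ ρ = ‖g a‖} with hSdef
  have hφy : 0 ≤ φ (‖y‖ ^ r) := Stmt17Aux.phi_nonneg hφ (Real.rpow_nonneg (norm_nonneg y) r)
  have key : ∀ ρ ∈ S, φ (ρ ^ r) ≤ φ (‖y‖ ^ r) * ‖E‖ := by
    rintro ρ ⟨g, hg, rfl⟩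
    exact Stmt17Aux.state_bound x z hx hz y φ hφ hsub r hr α hα0 hα1 hg
  have hnr : nr a = sSup S := rfl
  by_cases hS : S.Nonempty
  · have hbdd : BddAbove S := by
      refine ⟨‖a‖, ?_⟩
      rintro ρ ⟨g, hg, rfl⟩
      exact Stmt17Aux.abs_le_norm hg a
    set v := sSup S with hvdef
    have hv0 : 0 ≤ v := by
      obtain ⟨ρ0, hρ0⟩ := hS
      obtain ⟨g, hg, hρeq⟩ := hρ0
      have : 0 ≤ ρ0 := hρeq ▸ norm_nonneg _
      exact this.trans (le_csSup hbdd ⟨g, hg, hρeq⟩)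
    -- approximating sequence
    have hseq : ∀ n : ℕ, φ ((max 0 (v - 1 / (n + 1))) ^ r) ≤ φ (‖y‖ ^ r) * ‖E‖ := by
      intro n
      have hlt : v - 1 / (n + 1 : ℝ) < v := by
        have : (0:ℝ) < 1 / (n + 1) := by positivity
        linarith
      obtain ⟨ρ, hρS, hρ⟩ := exists_lt_of_lt_csSup hS hlt
      have hρ0 : 0 ≤ ρ := by
        obtain ⟨g, hg, hρeq⟩ := hρS
        exact hρeq ▸ norm_nonneg _
      have hle : max 0 (v - 1 / (n + 1)) ≤ ρ := max_le hρ0 hρ.le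
      have h1 : (max 0 (v - 1 / (n + 1))) ^ r ≤ ρ ^ r :=
        Real.rpow_le_rpow (le_max_left _ _) hle hr0.le
      have h2 := hφ.monotoneOn (Set.mem_Ici.mpr (Real.rpow_nonneg (le_max_left _ _) r))
        (Set.mem_Ici.mpr (Real.rpow_nonneg hρ0 r)) h1
      exact h2.trans (key ρ hρS)
    -- limit
    have htend1 : Filter.Tendsto (fun n : ℕ => v - 1 / (n + 1 : ℝ)) Filter.atTop (nhds v) := by
      have h0 : Filter.Tendsto (fun n : ℕ => 1 / (n + 1 : ℝ)) Filter.atTop (nhds 0) :=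
        tendsto_one_div_add_atTop_nhds_zero_nat
      simpa using Filter.Tendsto.sub (tendsto_const_nhds : Filter.Tendsto _ _ (nhds v)) h0
    have htend2 : Filter.Tendsto (fun n : ℕ => max 0 (v - 1 / (n + 1 : ℝ)))
        Filter.atTop (nhds v) := by
      have := Filter.Tendsto.max (tendsto_const_nhds : Filter.Tendsto (fun _ : ℕ => (0:ℝ)) _ _)
        htend1
      rwa [max_eq_right hv0] at this
    have htend3 : Filter.Tendsto (fun n : ℕ => (max 0 (v - 1 / (n + 1 : ℝ))) ^ r)
        Filter.atTop (nhds (v ^ r)) :=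
      ((Real.continuousAt_rpow_const v r (Or.inr hr0.le)).tendsto).comp htend2
    have htend4 : Filter.Tendsto (fun n : ℕ => φ ((max 0 (v - 1 / (n + 1 : ℝ))) ^ r))
        Filter.atTop (nhds (φ (v ^ r))) := by
      have hmem : v ^ r ∈ Set.Ici (0:ℝ) := Set.mem_Ici.mpr (Real.rpow_nonneg hv0 r)
      have hco : ContinuousWithinAt φ (Set.Ici 0) (v ^ r) := hφ.continuousOn _ hmem
      refine hco.tendsto.comp (tendsto_nhdsWithin_iff.mpr ⟨htend3, ?_⟩)
      exact Filter.Eventually.of_forall fun n =>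
        Set.mem_Ici.mpr (Real.rpow_nonneg (le_max_left _ _) r)
    exact le_of_tendsto htend4 (Filter.Eventually.of_forall hseq)
  · rw [Set.not_nonempty_iff_eq_empty] at hS
    rw [hnr, hS, Real.sSup_empty, Real.zero_rpow hr0.ne', hφ.map_zero]
    exact mul_nonneg hφy (norm_nonneg E)

end
end

section
/- Let A be a unital C*-algebra, g a state on A, x, z ∈ A, y an invertible element of A, and 0 ≤ α ≤ 1. Then |g(x y z)|² ≤ g(x·|y*|^{2(1−α)}·x*) · g(z*·|y|^{2α}·z), where |y| = (y*y)^{1/2}, |y*| = (y y*)^{1/2}, and the real powers are taken by continuous functional calculus. -/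
open scoped ComplexOrder

section

variable {A : Type*} [CStarAlgebra A] [PartialOrder A] [StarOrderedRing A]

/-- The modulus `|w| = (w* w)^{1/2}` given by the continuous functional calculus. -/
noncomputable def absA (w : A) : A := cfc (fun t : ℝ => Real.sqrt t) (star w * w)

lemma mylemm {g : A →ₗ[ℂ] ℂ} (hg : IsPosLF g) (a b : A) :
    g (star b * a) = starRingEnd ℂ (g (star a * b)) := by
  have hreal : ∀ c : A, starRingEnd ℂ (g (star c * c)) = g (star c * c) := by
    intro c
    have h := hg c
    rw [Complex.le_def] at h
    exact Complex.conj_eq_iff_im.mpr h.2.symm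
  have hp := hreal a
  have hs := hreal b
  have h1 := hreal (a + b)
  have h3 := hreal (a + Complex.I • b)
  simp only [star_add, star_smul, add_mul, mul_add, map_add, map_smul, smul_mul_assoc,
    mul_smul_comm, smul_eq_mul, Complex.star_def, Complex.conj_I, map_mul, map_neg,
    Complex.conj_conj, neg_mul, neg_neg] at h1 h3
  have key1 : starRingEnd ℂ (g (star a * b)) + starRingEnd ℂ (g (star b * a))
      = g (star a * b) + g (star b * a) := by linear_combination h1 - hp - hs
  have key2 : Complex.I * (starRingEnd ℂ (g (star b * a)) - starRingEnd ℂ (g (star a * b)))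
      = Complex.I * (g (star a * b) - g (star b * a)) := by
    linear_combination h3 - hp + Complex.I ^ 2 * hs
  have key2' := mul_left_cancel₀ Complex.I_ne_zero key2
  linear_combination (-1/2 : ℂ) * key1 + (1/2 : ℂ) * key2'

lemma mycs {g : A →ₗ[ℂ] ℂ} (hg : IsPosLF g) (a b : A) :
    ‖g (star a * b)‖ ^ 2 ≤ (g (star a * a)).re * (g (star b * b)).re := by
  letI : Inner ℂ A := ⟨fun v w => g (star v * w)⟩
  letI core : PreInnerProductSpace.Core ℂ A :=
  { toInner := inferInstance
    conj_inner_symm := fun v w => by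
      show starRingEnd ℂ (g (star w * v)) = g (star v * w)
      rw [mylemm hg v w, Complex.conj_conj]
    re_inner_nonneg := fun v => by
      have h := hg v; rw [Complex.le_def] at h; exact h.1
    add_left := fun u v w => by
      show g (star (u + v) * w) = g (star u * w) + g (star v * w)
      simp [star_add, add_mul]
    smul_left := fun v w r => by
      show g (star (r • v) * w) = starRingEnd ℂ r * g (star v * w)
      simp [star_smul, smul_mul_assoc] }
  have h := @InnerProductSpace.Core.inner_mul_inner_self_le ℂ A _ _ _ core a b
  change ‖g (star a * b)‖ * ‖g (star b * a)‖ ≤ (g (star a * a)).re * (g (star b * b)).re at h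
  rw [mylemm hg a b, RCLike.norm_conj] at h
  rw [sq]
  exact h


lemma contOn_rpow (r : ℝ) {S : Set ℝ} (hS : ∀ t ∈ S, 0 < t) :
    ContinuousOn (fun t : ℝ => t ^ r) S := fun t ht =>
  (Real.continuousAt_rpow_const t r (Or.inl (hS t ht).ne')).continuousWithinAt

lemma spec_pos {b : A} (hb : 0 ≤ b) (hbu : IsUnit b) : ∀ t ∈ spectrum ℝ b, 0 < t := by
  intro t ht
  refine lt_of_le_of_ne (spectrum_nonneg_of_nonneg hb ht) ?_
  intro h
  exact (spectrum.zero_notMem_iff ℝ).mpr hbu (h ▸ ht)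

lemma cfc_rpow_add {b : A} (hsp : ∀ t ∈ spectrum ℝ b, 0 < t) (r s w : ℝ) (hw : r + s = w) :
    cfc (fun t : ℝ => t ^ r) b * cfc (fun t : ℝ => t ^ s) b
      = cfc (fun t : ℝ => t ^ w) b := by
  rw [← cfc_mul _ _ b (contOn_rpow r hsp) (contOn_rpow s hsp)]
  exact cfc_congr fun t ht => by
    rw [← Real.rpow_add (hsp t ht) r s, hw]

lemma cfc_rpow_zero {b : A} (hb : IsSelfAdjoint b) :
    cfc (fun t : ℝ => t ^ (0 : ℝ)) b = 1 := by
  have : cfc (fun t : ℝ => t ^ (0 : ℝ)) b = cfc (fun _ : ℝ => (1 : ℝ)) b :=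
    cfc_congr fun t _ => Real.rpow_zero t
  rw [this, cfc_const_one ℝ b]

lemma cfc_rpow_one {b : A} (hb : IsSelfAdjoint b) :
    cfc (fun t : ℝ => t ^ (1 : ℝ)) b = b := by
  have : cfc (fun t : ℝ => t ^ (1 : ℝ)) b = cfc (id : ℝ → ℝ) b :=
    cfc_congr fun t _ => Real.rpow_one t
  rw [this, cfc_id ℝ b]

/-- Conjugation identity: `y f(y* y) y⁻¹ = f(y y*)` for invertible `y`. -/
lemma conj_cfc {y : A} (hy : IsUnit y) (f : ℝ → ℝ)
    (hf : ContinuousOn f (spectrum ℝ (star y * y))) :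
    y * cfc f (star y * y) * ↑hy.unit⁻¹ = cfc f (y * star y) := by
  set b := star y * y with hb_def
  have hbsa : IsSelfAdjoint b := IsSelfAdjoint.star_mul_self y
  have hb0 : 0 ≤ b := star_mul_self_nonneg y
  have hbu : IsUnit b := hy.star.mul hy
  have hsp := spec_pos hb0 hbu
  set yi : A := ↑hy.unit⁻¹ with hyi_def
  have hyyi : y * yi = 1 := hy.mul_val_inv
  have hyiy : yi * y = 1 := hy.val_inv_mul
  set s0 : A := cfc (fun t : ℝ => t ^ (-(1/2) : ℝ)) b with hs0_def
  have hs0sa : IsSelfAdjoint s0 := cfc_predicate _ b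
  have hss : s0 * s0 = cfc (fun t : ℝ => t ^ (-1 : ℝ)) b :=
    cfc_rpow_add hsp (-(1/2)) (-(1/2)) (-1) (by norm_num)
  have hbinv : cfc (fun t : ℝ => t ^ (-1 : ℝ)) b = yi * star yi := by
    refine left_inv_eq_right_inv (a := b) ?_ ?_
    · calc cfc (fun t : ℝ => t ^ (-1 : ℝ)) b * b
          = cfc (fun t : ℝ => t ^ (-1 : ℝ)) b * cfc (fun t : ℝ => t ^ (1 : ℝ)) b := by
            rw [cfc_rpow_one hbsa]
        _ = cfc (fun t : ℝ => t ^ (0 : ℝ)) b := cfc_rpow_add hsp (-1) 1 0 (by norm_num)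
        _ = 1 := cfc_rpow_zero hbsa
    · calc b * (yi * star yi) = star y * ((y * yi) * star yi) := by
            rw [hb_def]; simp only [mul_assoc]
        _ = star y * star yi := by rw [hyyi, one_mul]
        _ = star (yi * y) := (star_mul _ _).symm
        _ = 1 := by rw [hyiy, star_one]
  set u : A := y * s0 with hu_def
  have hstaru : star u = s0 * star y := by rw [hu_def, star_mul, hs0sa.star_eq]
  have hsbs : s0 * (b * s0) = 1 := by
    calc s0 * (b * s0) = s0 * (cfc (fun t : ℝ => t ^ (1 : ℝ)) b * s0) := by
          rw [cfc_rpow_one hbsa]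
      _ = (s0 * cfc (fun t : ℝ => t ^ (1 : ℝ)) b) * s0 := by rw [mul_assoc]
      _ = cfc (fun t : ℝ => t ^ ((1:ℝ)/2)) b * s0 := by
          rw [cfc_rpow_add hsp (-(1/2)) 1 ((1:ℝ)/2) (by norm_num)]
      _ = 1 := by
          rw [hs0_def, cfc_rpow_add hsp ((1:ℝ)/2) (-(1/2)) 0 (by norm_num)]
          exact cfc_rpow_zero hbsa
  have huu : star u * u = 1 := by
    rw [hstaru, hu_def]
    calc s0 * star y * (y * s0) = s0 * (b * s0) := by
          rw [hb_def]; simp only [mul_assoc]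
      _ = 1 := hsbs
  have hss' : s0 * s0 = yi * star yi := hss.trans hbinv
  have huu' : u * star u = 1 := by
    rw [hstaru, hu_def]
    calc y * s0 * (s0 * star y) = y * ((s0 * s0) * star y) := by simp only [mul_assoc]
      _ = y * (yi * (star yi * star y)) := by rw [hss']; simp only [mul_assoc]
      _ = y * (yi * star (y * yi)) := by rw [star_mul]
      _ = 1 := by rw [hyyi, star_one, mul_one, hyyi]
  let φ : A →⋆ₐ[ℝ] A :=
  { toFun := fun w => u * w * star u
    map_one' := by show u * 1 * star u = 1; rw [mul_one]; exact huu'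
    map_mul' := fun w1 w2 => by
      show u * (w1 * w2) * star u = (u * w1 * star u) * (u * w2 * star u)
      simp only [mul_assoc]
      rw [← mul_assoc (star u) u (w2 * star u), huu, one_mul]
    map_zero' := by show u * 0 * star u = 0; simp
    map_add' := fun w1 w2 => by
      show u * (w1 + w2) * star u = u * w1 * star u + u * w2 * star u
      simp [mul_add, add_mul]
    commutes' := fun r => by
      show u * algebraMap ℝ A r * star u = algebraMap ℝ A r
      simp only [Algebra.algebraMap_eq_smul_one, mul_smul_comm, smul_mul_assoc, mul_one]
      rw [huu']
    map_star' := fun w => by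
      show u * star w * star u = star (u * w * star u)
      simp [star_mul, mul_assoc] }
  have hφcont : Continuous φ := by
    show Continuous fun w : A => u * w * star u
    fun_prop
  have hφb : φ b = y * star y := by
    show u * b * star u = y * star y
    rw [hstaru, hu_def]
    calc y * s0 * b * (s0 * star y) = y * ((s0 * (b * s0)) * star y) := by
          simp only [mul_assoc]
      _ = y * star y := by rw [hsbs, one_mul]
  have hφsa : IsSelfAdjoint (φ b) := by
    rw [hφb]; exact IsSelfAdjoint.mul_star_self y
  have hkey := StarAlgHomClass.map_cfc (R := ℝ) (S := ℝ) φ f b hf hφcont hbsa hφsa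
  rw [hφb] at hkey
  have hLHS : φ (cfc f b) = y * cfc f b * yi := by
    show u * cfc f b * star u = y * cfc f b * yi
    rw [hstaru, hu_def]
    have hcomm : s0 * cfc f b = cfc f b * s0 :=
      (cfc_commute_cfc (fun t : ℝ => t ^ (-(1/2) : ℝ)) f b).eq
    calc y * s0 * cfc f b * (s0 * star y)
        = y * ((s0 * cfc f b) * (s0 * star y)) := by simp only [mul_assoc]
      _ = y * (cfc f b * ((s0 * s0) * star y)) := by rw [hcomm]; simp only [mul_assoc]
      _ = y * (cfc f b * (yi * (star yi * star y))) := by rw [hss']; simp only [mul_assoc]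
      _ = y * (cfc f b * (yi * star (y * yi))) := by rw [star_mul]
      _ = y * cfc f b * yi := by rw [hyyi, star_one, mul_one, mul_assoc]
  rw [hLHS] at hkey
  exact hkey


/-- `|g(x y z)|² ≤ g(x |y*|^{2(1-α)} x*) · g(z* |y|^{2α} z)` for a state `g`
and `y` invertible. -/
theorem stmt18 (g : A →ₗ[ℂ] ℂ) (hg : IsState g)
    (x z y : A) (hy : IsUnit y) (α : ℝ) (hα0 : 0 ≤ α) (hα1 : α ≤ 1) :
    ‖g (x * y * z)‖ ^ 2 ≤
      (g (x * cfc (fun t : ℝ => t ^ (2 * (1 - α))) (absA (star y)) * star x)).re *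
        (g (star z * cfc (fun t : ℝ => t ^ (2 * α)) (absA y) * z)).re := by
  have hpos := hg.1
  set b := star y * y with hb_def
  set c := y * star y with hc_def
  have hbsa : IsSelfAdjoint b := IsSelfAdjoint.star_mul_self y
  have hcsa : IsSelfAdjoint c := IsSelfAdjoint.mul_star_self y
  have hb0 : 0 ≤ b := star_mul_self_nonneg y
  have hc0 : 0 ≤ c := mul_star_self_nonneg y
  have hbu : IsUnit b := hy.star.mul hy
  have hcu : IsUnit c := hy.mul hy.star
  have hspb := spec_pos hb0 hbu
  have hspc := spec_pos hc0 hcu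
  set yi : A := ↑hy.unit⁻¹ with hyi_def
  have hyyi : y * yi = 1 := hy.mul_val_inv
  have hyiy : yi * y = 1 := hy.val_inv_mul
  have habs_y : absA y = cfc (fun t : ℝ => Real.sqrt t) b := rfl
  have habs_sy : absA (star y) = cfc (fun t : ℝ => Real.sqrt t) c := by
    simp only [absA, star_star]
    rfl
  have hcomp : ∀ (a : A), IsSelfAdjoint a → (∀ t ∈ spectrum ℝ a, 0 < t) → ∀ (β : ℝ),
      cfc (fun t : ℝ => t ^ (2*β)) (cfc (fun t : ℝ => Real.sqrt t) a)
        = cfc (fun t : ℝ => t ^ β) a := by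
    intro a ha hsp β
    rw [← cfc_comp' (fun t : ℝ => t ^ (2*β)) (fun t : ℝ => Real.sqrt t) a
      (contOn_rpow _ (by rintro v ⟨t, ht, rfl⟩; exact Real.sqrt_pos.mpr (hsp t ht)))
      Real.continuous_sqrt.continuousOn]
    refine cfc_congr fun t ht => ?_
    have ht' := hsp t ht
    show Real.sqrt t ^ (2*β) = t ^ β
    rw [Real.sqrt_eq_rpow, ← Real.rpow_mul ht'.le, show (1/(2:ℝ)) * (2*β) = β by ring]
  have hA1 : cfc (fun t : ℝ => t ^ (2*α)) (absA y) = cfc (fun t : ℝ => t ^ α) b := by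
    rw [habs_y]; exact hcomp b hbsa hspb α
  have hA2 : cfc (fun t : ℝ => t ^ (2*(1-α))) (absA (star y))
      = cfc (fun t : ℝ => t ^ (1-α)) c := by
    rw [habs_sy]; exact hcomp c hcsa hspc (1-α)
  set E : A := cfc (fun t : ℝ => t ^ (α/2)) b with hE_def
  set Ei : A := cfc (fun t : ℝ => t ^ (-(α/2))) b with hEi_def
  have hEsa : IsSelfAdjoint E := cfc_predicate _ b
  have hEisa : IsSelfAdjoint Ei := cfc_predicate _ b
  have hEiE : Ei * E = 1 := by
    rw [hEi_def, hE_def, cfc_rpow_add hspb (-(α/2)) (α/2) 0 (by ring)]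
    exact cfc_rpow_zero hbsa
  have hEE : E * E = cfc (fun t : ℝ => t ^ α) b :=
    cfc_rpow_add hspb (α/2) (α/2) α (by ring)
  have hEiEi : Ei * Ei = cfc (fun t : ℝ => t ^ (-α)) b :=
    cfc_rpow_add hspb (-(α/2)) (-(α/2)) (-α) (by ring)
  have hconj : y * cfc (fun t : ℝ => t ^ (-α)) b * yi = cfc (fun t : ℝ => t ^ (-α)) c :=
    conj_cfc hy _ (contOn_rpow _ hspb)
  have hmid : y * cfc (fun t : ℝ => t ^ (-α)) b * star y
      = cfc (fun t : ℝ => t ^ (1-α)) c := by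
    have h1 : star y = yi * c := by rw [hc_def, ← mul_assoc, hyiy, one_mul]
    calc y * cfc (fun t : ℝ => t ^ (-α)) b * star y
        = (y * cfc (fun t : ℝ => t ^ (-α)) b * yi) * c := by rw [h1, ← mul_assoc]
      _ = cfc (fun t : ℝ => t ^ (-α)) c * cfc (fun t : ℝ => t ^ (1:ℝ)) c := by
          rw [hconj, cfc_rpow_one hcsa]
      _ = cfc (fun t : ℝ => t ^ (1-α)) c := cfc_rpow_add hspc (-α) 1 (1-α) (by ring)
  have hcs := mycs hpos (star (x * y * Ei)) (E * z)
  rw [star_star] at hcs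
  have harg1 : x * y * Ei * (E * z) = x * y * z := by
    simp only [mul_assoc]
    rw [← mul_assoc Ei E z, hEiE, one_mul]
  have harg2 : x * y * Ei * star (x * y * Ei)
      = x * cfc (fun t : ℝ => t ^ (1-α)) c * star x := by
    have hst : star (x * y * Ei) = Ei * (star y * star x) := by
      rw [star_mul, star_mul, hEisa.star_eq]
    rw [hst]
    calc x * y * Ei * (Ei * (star y * star x))
        = x * (y * ((Ei * Ei) * (star y * star x))) := by simp only [mul_assoc]
      _ = x * ((y * cfc (fun t : ℝ => t ^ (-α)) b * star y) * star x) := by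
          rw [hEiEi]; simp only [mul_assoc]
      _ = x * cfc (fun t : ℝ => t ^ (1-α)) c * star x := by rw [hmid, mul_assoc]
  have harg3 : star (E * z) * (E * z) = star z * cfc (fun t : ℝ => t ^ α) b * z := by
    rw [star_mul, hEsa.star_eq]
    calc star z * E * (E * z) = star z * ((E * E) * z) := by simp only [mul_assoc]
      _ = star z * cfc (fun t : ℝ => t ^ α) b * z := by rw [hEE, mul_assoc]
  rw [harg1, harg2, harg3] at hcs
  rw [hA1, hA2]
  exact hcs


end
end
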